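/- arXiv:1408.2206 — 4 statements merged into one kernel-verified Lean document; each statement's English description precedes it below -/
import Mathlib

section
/- Let s ≥ 1 be an integer and let pₙ*/qₙ* denote the nth convergent of the regular continued fraction expansion of s·e^(1/s). Then for every integer n ≥ 0: (i) p*_{3n} − s·e^(1/s)·q*_{3n} = (1/s^(n+2)) · ∫₀¹ (xⁿ(x−1)^(n+1)/n!) · s·e^(x/s) dx; (ii) p*_{3n+1} − s·e^(1/s)·q*_{3n+1} = −(1/s^(n+2)) · ∫₀¹ (x^(n+1)(x−1)^(n+1)/(n+1)!) · s·e^(x/s) dx; (iii) p*_{3n+2} − s·e^(1/s)·q*_{3n+2} = (1/s^(n+3)) · ∫₀¹ ((x+s−1)·x^(n+1)(x−1)^(n+1)/(n+1)!) · s·e^(x/s) dx. -/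
open Real intervalIntegral

namespace Kom

noncomputable def u (s m k : ℕ) : ℝ := ∫ x in (0:ℝ)..1, x^m * (x-1)^k * Real.exp (x / s)

lemma cont_integrand (s m k : ℕ) : Continuous fun x : ℝ => x^m * (x-1)^k * Real.exp (x / s) := by
  fun_prop

lemma integrable (s m k : ℕ) {a b : ℝ} :
    IntervalIntegrable (fun x : ℝ => x^m * (x-1)^k * Real.exp (x / s)) MeasureTheory.volume a b :=
  (cont_integrand s m k).intervalIntegrable a b

lemma u_rec (s m k : ℕ) (hs : 1 ≤ s) :
    u s (m+1) (k+1) = -(s:ℝ) * ((m+1) * u s m (k+1) + (k+1) * u s (m+1) k) := by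
  have hs0 : (s:ℝ) ≠ 0 := by positivity
  have key : ∫ x in (0:ℝ)..1,
      ((s:ℝ)*(m+1)) * (x^m * (x-1)^(k+1) * Real.exp (x / s))
      + (((s:ℝ)*(k+1)) * (x^(m+1) * (x-1)^k * Real.exp (x / s))
      + x^(m+1) * (x-1)^(k+1) * Real.exp (x / s)) = 0 := by
    have hder : ∀ x ∈ Set.uIcc (0:ℝ) 1, HasDerivAt
        (fun x : ℝ => x^(m+1) * (x-1)^(k+1) * ((s:ℝ) * Real.exp (x / s)))
        (((s:ℝ)*(m+1)) * (x^m * (x-1)^(k+1) * Real.exp (x / s))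
          + (((s:ℝ)*(k+1)) * (x^(m+1) * (x-1)^k * Real.exp (x / s))
          + x^(m+1) * (x-1)^(k+1) * Real.exp (x / s))) x := by
      intro x _
      have h1 : HasDerivAt (fun x : ℝ => x^(m+1) * (x-1)^(k+1))
          ((m+1) * x^m * (x-1)^(k+1) + x^(m+1) * ((k+1) * (x-1)^k)) x := by
        have ha : HasDerivAt (fun x : ℝ => x^(m+1)) ((m+1 : ℕ) * x^m) x := by
          simpa using (hasDerivAt_pow (m+1) x)
        have hb : HasDerivAt (fun x : ℝ => (x-1)^(k+1)) ((k+1 : ℕ) * (x-1)^k) x := by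
          have : HasDerivAt (fun x : ℝ => x - 1) 1 x := (hasDerivAt_id x).sub_const 1
          simpa using (HasDerivAt.fun_pow this (k+1))
        simpa [mul_comm, mul_assoc, mul_left_comm] using ha.fun_mul hb
      have h2 : HasDerivAt (fun x : ℝ => (s:ℝ) * Real.exp (x / s)) (Real.exp (x / s)) x := by
        have : HasDerivAt (fun x : ℝ => x / s) (1 / s) x := (hasDerivAt_id x).div_const _
        have := (Real.hasDerivAt_exp (x / s)).comp x this
        have h3 := this.const_mul (s:ℝ)
        refine h3.congr_deriv ?_
        field_simp
      have := h1.fun_mul h2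
      refine this.congr_deriv ?_
      push_cast
      ring
    have := intervalIntegral.integral_eq_sub_of_hasDerivAt hder (by
      apply Continuous.intervalIntegrable
      fun_prop)
    rw [this]
    simp
  rw [intervalIntegral.integral_add, intervalIntegral.integral_add,
      intervalIntegral.integral_const_mul, intervalIntegral.integral_const_mul] at key
  · unfold u
    push_cast
    linarith [key]
  · exact (integrable s (m+1) k).const_mul _
  · exact integrable s (m+1) (k+1)
  · exact (integrable s m (k+1)).const_mul _
  · exact ((integrable s (m+1) k).const_mul _).add (integrable s (m+1) (k+1))

end Kom

namespace Kom

lemma u01 (s : ℕ) (hs : 1 ≤ s) :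
    u s 0 1 = (s:ℝ) + s^2 - s^2 * Real.exp (1/(s:ℝ)) := by
  have hs0 : (s:ℝ) ≠ 0 := by positivity
  have hder : ∀ x ∈ Set.uIcc (0:ℝ) 1, HasDerivAt
      (fun x : ℝ => ((s:ℝ)*(x-1) - s^2) * Real.exp (x / s))
      (x^0 * (x-1)^1 * Real.exp (x / s)) x := by
    intro x _
    have h1 : HasDerivAt (fun x : ℝ => (s:ℝ)*(x-1) - s^2) (s:ℝ) x := by
      simpa using (((hasDerivAt_id x).sub_const 1).const_mul (s:ℝ)).sub_const ((s:ℝ)^2)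
    have h2 : HasDerivAt (fun x : ℝ => Real.exp (x / s)) (Real.exp (x / s) * (1/s)) x := by
      have : HasDerivAt (fun x : ℝ => x / s) (1 / s) x := (hasDerivAt_id x).div_const _
      exact (Real.hasDerivAt_exp (x / s)).comp x this
    have := h1.fun_mul h2
    refine this.congr_deriv ?_
    field_simp
    ring
  have := intervalIntegral.integral_eq_sub_of_hasDerivAt hder
    ((cont_integrand s 0 1).intervalIntegrable 0 1)
  unfold u
  rw [this]
  norm_num
  ring

lemma u10 (s : ℕ) (hs : 1 ≤ s) :
    u s 1 0 = ((s:ℝ) - s^2) * Real.exp (1/(s:ℝ)) + s^2 := by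
  have hs0 : (s:ℝ) ≠ 0 := by positivity
  have hder : ∀ x ∈ Set.uIcc (0:ℝ) 1, HasDerivAt
      (fun x : ℝ => ((s:ℝ)*x - s^2) * Real.exp (x / s))
      (x^1 * (x-1)^0 * Real.exp (x / s)) x := by
    intro x _
    have h1 : HasDerivAt (fun x : ℝ => (s:ℝ)*x - s^2) (s:ℝ) x := by
      simpa using ((hasDerivAt_id x).const_mul (s:ℝ)).sub_const ((s:ℝ)^2)
    have h2 : HasDerivAt (fun x : ℝ => Real.exp (x / s)) (Real.exp (x / s) * (1/s)) x := by
      have : HasDerivAt (fun x : ℝ => x / s) (1 / s) x := (hasDerivAt_id x).div_const _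
      exact (Real.hasDerivAt_exp (x / s)).comp x this
    have := h1.fun_mul h2
    refine this.congr_deriv ?_
    field_simp
    ring
  have := intervalIntegral.integral_eq_sub_of_hasDerivAt hder
    ((cont_integrand s 1 0).intervalIntegrable 0 1)
  unfold u
  rw [this]
  norm_num
  try ring

/-- generic strict integral comparison on [0,1] -/
lemma intlt {f g : ℝ → ℝ} (hf : Continuous f) (hg : Continuous g)
    (h : ∀ x ∈ Set.Ioo (0:ℝ) 1, f x < g x) :
    (∫ x in (0:ℝ)..1, f x) < ∫ x in (0:ℝ)..1, g x := by
  have hpos : 0 < ∫ x in (0:ℝ)..1, (g x - f x) := by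
    apply intervalIntegral.intervalIntegral_pos_of_pos_on
      ((hg.fun_sub hf).intervalIntegrable 0 1)
    · intro x hx; linarith [h x hx]
    · norm_num
  rw [intervalIntegral.integral_sub (hg.intervalIntegrable 0 1) (hf.intervalIntegrable 0 1)] at hpos
  linarith

noncomputable def w (s m k : ℕ) : ℝ := ∫ x in (0:ℝ)..1, x^m * (1-x)^k * Real.exp (x / s)

lemma cont_w (s m k : ℕ) : Continuous fun x : ℝ => x^m * (1-x)^k * Real.exp (x / s) := by
  fun_prop

lemma u_eq_w (s m k : ℕ) : u s m k = (-1)^k * w s m k := by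
  unfold u w
  rw [← intervalIntegral.integral_const_mul]
  apply intervalIntegral.integral_congr
  intro x _
  have h : (x - 1)^k = (-1)^k * (1-x)^k := by
    rw [← mul_pow]; ring_nf
  show x ^ m * (x - 1) ^ k * Real.exp (x / s) = (-1) ^ k * (x ^ m * (1 - x) ^ k * Real.exp (x / s))
  rw [h]; ring

lemma w_pos (s m k : ℕ) : 0 < w s m k := by
  apply intervalIntegral.intervalIntegral_pos_of_pos_on ((cont_w s m k).intervalIntegrable 0 1)
  · intro x hx
    have h1 : 0 < x := hx.1
    have h2 : (0:ℝ) < 1 - x := by linarith [hx.2]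
    positivity
  · norm_num

lemma w_lt_left (s m k : ℕ) : w s (m+1) k < w s m k := by
  apply intlt (cont_w s (m+1) k) (cont_w s m k)
  intro x hx
  have h1 : 0 < x := hx.1
  have h2 : x < 1 := hx.2
  have : x^(m+1) < x^m := by
    calc x^(m+1) = x^m * x := by ring
    _ < x^m * 1 := by
      have : (0:ℝ) < x^m := by positivity
      nlinarith
    _ = x^m := by ring
  have he : 0 < Real.exp (x / s) := Real.exp_pos _
  have hx1 : (0:ℝ) < 1 - x := by linarith
  have hk : 0 < (1-x)^k := by positivity
  have := mul_lt_mul_of_pos_right (mul_lt_mul_of_pos_right this hk) he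
  linarith

end Kom

namespace Kom

noncomputable def wc (s m k : ℕ) : ℝ :=
  ∫ x in (0:ℝ)..1, (x + s - 1) * (x^m * (1-x)^k * Real.exp (x / s))

lemma cont_wc (s m k : ℕ) :
    Continuous fun x : ℝ => (x + s - 1) * (x^m * (1-x)^k * Real.exp (x / s)) := by fun_prop

lemma wc_pos (s m k : ℕ) (hs : 1 ≤ s) : 0 < wc s m k := by
  apply intervalIntegral.intervalIntegral_pos_of_pos_on ((cont_wc s m k).intervalIntegrable 0 1)
  · intro x hx
    have h1 : 0 < x := hx.1
    have h2 : (0:ℝ) < 1 - x := by linarith [hx.2]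
    have h3 : (1:ℝ) ≤ s := by exact_mod_cast hs
    have : 0 < x + (s:ℝ) - 1 := by linarith
    positivity
  · norm_num

lemma wc_lt (s m k : ℕ) (hs : 1 ≤ s) : wc s m k < (s:ℝ) * w s m k := by
  have h0 : (s:ℝ) * w s m k = ∫ x in (0:ℝ)..1, (s:ℝ) * (x^m * (1-x)^k * Real.exp (x / s)) := by
    unfold w; rw [intervalIntegral.integral_const_mul]
  rw [h0]
  unfold wc
  apply intlt (cont_wc s m k) (by fun_prop)
  intro x hx
  have h1 : 0 < x := hx.1
  have h2 : (0:ℝ) < 1 - x := by linarith [hx.2]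
  have h3 : (1:ℝ) ≤ s := by exact_mod_cast hs
  have hf : 0 < x^m * (1-x)^k * Real.exp (x / s) := by positivity
  nlinarith

lemma refl_ineq (s m : ℕ) (hs : 1 ≤ s) : (s:ℝ) * w s m m < 2 * wc s m m := by
  set g : ℝ → ℝ := fun x => (2*x + s - 2) * (x^m * (1-x)^m * Real.exp (x / s)) with hg
  have contg : Continuous g := by fun_prop
  have conth : Continuous fun x => g x + g (1 - x) := by fun_prop
  have hs1 : (1:ℝ) ≤ s := by exact_mod_cast hs
  -- reflection
  have hrefl : (∫ x in (0:ℝ)..1, g (1 - x)) = ∫ x in (0:ℝ)..1, g x := by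
    have := intervalIntegral.integral_comp_sub_left (a := (0:ℝ)) (b := 1) g 1
    rw [show (1:ℝ)-1 = 0 by norm_num, show (1:ℝ)-0 = 1 by norm_num] at this
    exact this
  have contg' : Continuous fun x : ℝ => g (1 - x) := by
    simp only [hg]; fun_prop
  have hsum : (∫ x in (0:ℝ)..1, (g x + g (1 - x))) = 2 * ∫ x in (0:ℝ)..1, g x := by
    rw [intervalIntegral.integral_add (contg.intervalIntegrable 0 1)
      (contg'.intervalIntegrable 0 1)]
    rw [hrefl]; ring
  -- pointwise form of the symmetrized integrand
  have hform : ∀ x : ℝ, g x + g (1 - x) = x^m * (1-x)^m *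
      (((s:ℝ)-1) * (Real.exp (x/s) + Real.exp ((1-x)/s))
        + (2*x-1) * (Real.exp (x/s) - Real.exp ((1-x)/s))) := by
    intro x
    simp only [hg]
    ring_nf
  have hs0 : (0:ℝ) < s := by linarith
  have hkey : ∀ x : ℝ, 0 ≤ (2*x-1) * (Real.exp (x/s) - Real.exp ((1-x)/s)) := by
    intro x
    rcases le_total x (1/2) with h | h
    · have : x / s ≤ (1-x) / s := by
        apply div_le_div_of_nonneg_right ?_ hs0.le
        · linarith
      have := Real.exp_le_exp.2 this
      nlinarith
    · have : (1-x) / s ≤ x / s := by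
        apply div_le_div_of_nonneg_right ?_ hs0.le
        · linarith
      have := Real.exp_le_exp.2 this
      nlinarith
  have hnonneg : ∀ x ∈ Set.Icc (0:ℝ) (1/2 : ℝ), 0 ≤ g x + g (1 - x) := by
    intro x hx
    rw [hform]
    have h1 : (0:ℝ) ≤ x := hx.1
    have h2 : (0:ℝ) ≤ 1 - x := by linarith [hx.2]
    have hp : 0 ≤ x^m * (1-x)^m := by positivity
    have h3 : 0 ≤ ((s:ℝ)-1) * (Real.exp (x/s) + Real.exp ((1-x)/s)) := by
      have := Real.exp_pos (x/(s:ℝ)); have := Real.exp_pos ((1-x)/(s:ℝ)); nlinarith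
    nlinarith [hkey x]
  have hpos2 : ∀ x ∈ Set.Ioo (1/2 : ℝ) 1, 0 < g x + g (1 - x) := by
    intro x hx
    rw [hform]
    have h1 : (0:ℝ) < x := by linarith [hx.1]
    have h2 : (0:ℝ) < 1 - x := by linarith [hx.2]
    have hp : 0 < x^m * (1-x)^m := by positivity
    have h3 : 0 ≤ ((s:ℝ)-1) * (Real.exp (x/s) + Real.exp ((1-x)/s)) := by
      have := Real.exp_pos (x/(s:ℝ)); have := Real.exp_pos ((1-x)/(s:ℝ)); nlinarith
    have h4 : 0 < (2*x-1) * (Real.exp (x/s) - Real.exp ((1-x)/s)) := by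
      have hlt : (1-x) / s < x / s := by
        apply div_lt_div_of_pos_right ?_ hs0
        · linarith [hx.1]
      have := Real.exp_lt_exp.2 hlt
      nlinarith [hx.1]
    nlinarith
  have hsplit : (∫ x in (0:ℝ)..(1/2:ℝ), (g x + g (1-x))) + (∫ x in (1/2:ℝ)..1, (g x + g (1-x)))
      = ∫ x in (0:ℝ)..1, (g x + g (1-x)) :=
    intervalIntegral.integral_add_adjacent_intervals
      (conth.intervalIntegrable 0 (1/2)) (conth.intervalIntegrable (1/2) 1)
  have hI1 : 0 ≤ ∫ x in (0:ℝ)..(1/2:ℝ), (g x + g (1-x)) := by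
    apply intervalIntegral.integral_nonneg (by norm_num)
    exact fun x hx => hnonneg x hx
  have hI2 : 0 < ∫ x in (1/2:ℝ)..1, (g x + g (1-x)) := by
    apply intervalIntegral.intervalIntegral_pos_of_pos_on
      (conth.intervalIntegrable (1/2) 1) hpos2 (by norm_num)
  have hgpos : 0 < ∫ x in (0:ℝ)..1, g x := by
    have : 0 < ∫ x in (0:ℝ)..1, (g x + g (1-x)) := by
      rw [← hsplit]; linarith
    rw [hsum] at this; linarith
  -- now express ∫ g in terms of wc and w
  have hdecomp : (∫ x in (0:ℝ)..1, g x) = 2 * wc s m m - (s:ℝ) * w s m m := by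
    unfold wc w
    rw [← intervalIntegral.integral_const_mul, ← intervalIntegral.integral_const_mul,
      ← intervalIntegral.integral_sub ((continuous_const.fun_mul (cont_wc s m m)).intervalIntegrable 0 1)
        ((continuous_const.fun_mul (cont_w s m m)).intervalIntegrable 0 1)]
    apply intervalIntegral.integral_congr
    intro x _
    simp only [hg]
    ring
  rw [hdecomp] at hgpos
  linarith

end Kom

namespace Kom

noncomputable def uc (s m k : ℕ) : ℝ :=
  ∫ x in (0:ℝ)..1, (x + s - 1) * x^m * (x-1)^k * Real.exp (x / s)

lemma cont_uc (s m k : ℕ) :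
    Continuous fun x : ℝ => (x + s - 1) * x^m * (x-1)^k * Real.exp (x / s) := by fun_prop

lemma uc_eq (s m k : ℕ) : uc s m k = u s m (k+1) + s * u s m k := by
  unfold uc u
  rw [← intervalIntegral.integral_const_mul,
    ← intervalIntegral.integral_add (integrable s m (k+1))
      ((continuous_const.fun_mul (cont_integrand s m k)).intervalIntegrable 0 1)]
  apply intervalIntegral.integral_congr
  intro x _
  show (x + s - 1) * x^m * (x-1)^k * Real.exp (x / s)
    = x^m * (x-1)^(k+1) * Real.exp (x / s) + (s:ℝ) * (x^m * (x-1)^k * Real.exp (x / s))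
  ring

lemma uc_eq_wc (s m k : ℕ) : uc s m k = (-1)^k * wc s m k := by
  unfold uc wc
  rw [← intervalIntegral.integral_const_mul]
  apply intervalIntegral.integral_congr
  intro x _
  show (x + s - 1) * x^m * (x-1)^k * Real.exp (x / s)
    = (-1)^k * ((x + s - 1) * (x^m * (1-x)^k * Real.exp (x / s)))
  have h : (x - 1)^k = (-1)^k * (1-x)^k := by
    rw [← mul_pow]; ring_nf
  rw [h]; ring

lemma u_split (s m k : ℕ) : u s (m+1) (k+1) = u s m (k+2) + u s m (k+1) := by
  unfold u
  rw [← intervalIntegral.integral_add (integrable s m (k+2)) (integrable s m (k+1))]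
  apply intervalIntegral.integral_congr
  intro x _
  show x^(m+1) * (x-1)^(k+1) * Real.exp (x / s)
    = x^m * (x-1)^(k+2) * Real.exp (x / s) + x^m * (x-1)^(k+1) * Real.exp (x / s)
  ring

lemma w_id (s m : ℕ) : w s m (m+1) = (s:ℝ) * w s m m - wc s m m := by
  unfold w wc
  rw [← intervalIntegral.integral_const_mul,
    ← intervalIntegral.integral_sub ((continuous_const.fun_mul (cont_w s m m)).intervalIntegrable 0 1)
      ((cont_wc s m m).intervalIntegrable 0 1)]
  apply intervalIntegral.integral_congr
  intro x _
  show x^m * (1-x)^(m+1) * Real.exp (x / s)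
    = (s:ℝ) * (x^m * (1-x)^m * Real.exp (x / s)) - (x + s - 1) * (x^m * (1-x)^m * Real.exp (x / s))
  ring

lemma w_lt_wc (s m : ℕ) (hs : 1 ≤ s) : w s m (m+1) < wc s m m := by
  have := refl_ineq s m hs
  rw [w_id]
  linarith

/-- the error sequence `pₖ - α qₖ` -/
noncomputable def E (s : ℕ) (k : ℕ) : ℝ :=
  if k % 3 = 0 then (1/(s:ℝ)^(k/3+2)) * ((s:ℝ) * u s (k/3) (k/3+1) / (k/3).factorial)
  else if k % 3 = 1 then -((1/(s:ℝ)^(k/3+2)) * ((s:ℝ) * u s (k/3+1) (k/3+1) / (k/3+1).factorial))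
  else (1/(s:ℝ)^(k/3+3)) * ((s:ℝ) * uc s (k/3+1) (k/3+1) / (k/3+1).factorial)

lemma E_3n (s n : ℕ) :
    E s (3*n) = (1/(s:ℝ)^(n+2)) * ((s:ℝ) * u s n (n+1) / n.factorial) := by
  have h1 : (3*n) % 3 = 0 := by omega
  have h2 : (3*n) / 3 = n := by omega
  simp [E, h1, h2]

lemma E_3n1 (s n : ℕ) :
    E s (3*n+1) = -((1/(s:ℝ)^(n+2)) * ((s:ℝ) * u s (n+1) (n+1) / (n+1).factorial)) := by
  have h1 : (3*n+1) % 3 = 1 := by omega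
  have h2 : (3*n+1) / 3 = n := by omega
  simp [E, h1, h2]

lemma E_3n2 (s n : ℕ) :
    E s (3*n+2) = (1/(s:ℝ)^(n+3)) * ((s:ℝ) * uc s (n+1) (n+1) / (n+1).factorial) := by
  have h1 : (3*n+2) % 3 = 2 := by omega
  have h2 : (3*n+2) / 3 = n := by omega
  simp [E, h1, h2]

/-- partial quotients -/
def a (s : ℕ) (k : ℕ) : ℕ :=
  if k = 0 then s+1 else if k % 3 = 1 then 2*s-1 else if k % 3 = 2 then 2*(k/3)+2 else 1

lemma a_3n1 (s n : ℕ) (hs : 1 ≤ s) : ((a s (3*n+1) : ℕ) : ℝ) = 2*(s:ℝ)-1 := by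
  have h1 : (3*n+1) % 3 = 1 := by omega
  simp only [a, h1, if_false, if_true, Nat.add_eq_zero]
  rw [if_neg (by omega : ¬(3*n = 0 ∧ 1 = 0))]
  have h2 : 1 ≤ 2*s := by omega
  push_cast [h2]
  ring

lemma a_3n2 (s n : ℕ) : ((a s (3*n+2) : ℕ) : ℝ) = 2*(n:ℝ)+2 := by
  have h1 : (3*n+2) % 3 = 2 := by omega
  have h2 : (3*n+2) / 3 = n := by omega
  have h0 : ¬ (3*n+2 = 0) := by omega
  simp only [a, h1, h2]
  rw [if_neg h0]
  norm_num

lemma a_3n3 (s n : ℕ) : ((a s (3*n+3) : ℕ) : ℝ) = 1 := by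
  have h1 : (3*n+3) % 3 = 0 := by omega
  have h0 : ¬ (3*n+3 = 0) := by omega
  simp only [a]
  rw [if_neg h0, if_neg (by omega), if_neg (by omega)]
  norm_num

lemma a_pos (s : ℕ) (hs : 1 ≤ s) (k : ℕ) : 1 ≤ a s k := by
  unfold a
  split <;> try omega
  split <;> try omega
  split <;> omega

end Kom

namespace Kom

noncomputable def E' (s : ℕ) : ℕ → ℝ
  | 0 => 1
  | k+1 => E s k

variable {s : ℕ}

lemma fact_succ_cast (n : ℕ) : (((n+1).factorial : ℕ) : ℝ) = ((n:ℝ)+1) * (n.factorial : ℕ) := by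
  push_cast [Nat.factorial_succ]
  ring

lemma E_rec_b1 (hs : 1 ≤ s) : E s 1 = (a s 1 : ℝ) * E s 0 + 1 := by
  have h1 : E s 1 = E s (3*0+1) := by norm_num
  have h0 : E s 0 = E s (3*0) := by norm_num
  rw [h1, h0, E_3n1, E_3n, (by norm_num : (3*0+1 : ℕ) = 3*0+1)]
  rw [a_3n1 s 0 hs]
  rw [u_rec s 0 0 hs, u01 s hs, u10 s hs]
  have hs0 : (s:ℝ) ≠ 0 := by positivity
  field_simp
  ring

lemma E_rec_c (hs : 1 ≤ s) (n : ℕ) : E s (3*n+2) = (a s (3*n+2) : ℝ) * E s (3*n+1) + E s (3*n) := by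
  rw [E_3n2, E_3n1, E_3n, a_3n2]
  have hsub : u s n (n+2) = u s (n+1) (n+1) - u s n (n+1) := by
    have := u_split s n n
    linarith
  rw [uc_eq, u_rec s n (n+1) hs, hsub, fact_succ_cast]
  have hs0 : (s:ℝ) ≠ 0 := by positivity
  have hf : (n.factorial : ℝ) ≠ 0 := by exact_mod_cast n.factorial_ne_zero
  field_simp
  push_cast
  ring

lemma E_rec_a (hs : 1 ≤ s) (n : ℕ) :
    E s (3*n+3) = (a s (3*n+3) : ℝ) * E s (3*n+2) + E s (3*n+1) := by
  rw [a_3n3 s n]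
  rw [show (3*n+3 : ℕ) = 3*(n+1) from by ring, E_3n, E_3n2, E_3n1]
  rw [uc_eq]
  have hs0 : (s:ℝ) ≠ 0 := by positivity
  have hf : (((n+1).factorial : ℕ) : ℝ) ≠ 0 := by exact_mod_cast (n+1).factorial_ne_zero
  field_simp
  ring

lemma E_rec_b (hs : 1 ≤ s) (n : ℕ) :
    E s (3*n+4) = (a s (3*n+4) : ℝ) * E s (3*n+3) + E s (3*n+2) := by
  have h4 : (3*n+4 : ℕ) = 3*(n+1)+1 := by ring
  have h3 : (3*n+3 : ℕ) = 3*(n+1) := by ring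
  rw [h4, h3, E_3n1, E_3n, E_3n2, a_3n1 s (n+1) hs]
  have hsub : u s (n+2) (n+1) = u s (n+1) (n+2) + u s (n+1) (n+1) := u_split s (n+1) n
  rw [u_rec s (n+1) (n+1) hs, hsub, uc_eq, fact_succ_cast (n+1)]
  have hs0 : (s:ℝ) ≠ 0 := by positivity
  have hf : (((n+1).factorial : ℕ) : ℝ) ≠ 0 := by exact_mod_cast (n+1).factorial_ne_zero
  field_simp
  ring

lemma E'_rec (hs : 1 ≤ s) (k : ℕ) : E' s (k+2) = (a s (k+1) : ℝ) * E' s (k+1) + E' s k := by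
  rcases k with _ | j
  · show E s 1 = (a s 1 : ℝ) * E s 0 + 1
    exact E_rec_b1 hs
  · show E s (j+2) = (a s (j+2) : ℝ) * E s (j+1) + E s j
    obtain ⟨m, rfl | rfl | rfl⟩ : ∃ m, j = 3*m ∨ j = 3*m+1 ∨ j = 3*m+2 := ⟨j/3, by omega⟩
    · exact E_rec_c hs m
    · exact E_rec_a hs m
    · exact E_rec_b hs m

end Kom

namespace Kom

variable {s : ℕ}

lemma E_3n_abs (s m : ℕ) : (-1:ℝ)^(3*m+1) * E s (3*m)
    = (1/(s:ℝ)^(m+2)) * ((s:ℝ) * w s m (m+1) / (m.factorial : ℝ)) := by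
  rw [E_3n, u_eq_w]
  rw [show (1/(s:ℝ)^(m+2)) * ((s:ℝ) * ((-1:ℝ)^(m+1) * w s m (m+1)) / (m.factorial : ℝ))
      = (-1:ℝ)^(m+1) * ((1/(s:ℝ)^(m+2)) * ((s:ℝ) * w s m (m+1) / (m.factorial : ℝ))) from by ring]
  rw [← mul_assoc, ← pow_add, Even.neg_one_pow ⟨2*m+1, by ring⟩, one_mul]

lemma E_3n1_abs (s m : ℕ) : (-1:ℝ)^(3*m+2) * E s (3*m+1)
    = (1/(s:ℝ)^(m+2)) * ((s:ℝ) * w s (m+1) (m+1) / ((m+1).factorial : ℝ)) := by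
  rw [E_3n1, u_eq_w]
  rw [show -((1/(s:ℝ)^(m+2)) * ((s:ℝ) * ((-1:ℝ)^(m+1) * w s (m+1) (m+1)) / ((m+1).factorial : ℝ)))
      = (-1:ℝ)^(m+2) * ((1/(s:ℝ)^(m+2)) * ((s:ℝ) * w s (m+1) (m+1) / ((m+1).factorial : ℝ)))
      from by rw [pow_succ]; ring]
  rw [← mul_assoc, ← pow_add, Even.neg_one_pow ⟨2*m+2, by ring⟩, one_mul]

lemma E_3n2_abs (s m : ℕ) : (-1:ℝ)^(3*m+3) * E s (3*m+2)
    = (1/(s:ℝ)^(m+3)) * ((s:ℝ) * wc s (m+1) (m+1) / ((m+1).factorial : ℝ)) := by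
  rw [E_3n2, uc_eq_wc]
  rw [show (1/(s:ℝ)^(m+3)) * ((s:ℝ) * ((-1:ℝ)^(m+1) * wc s (m+1) (m+1)) / ((m+1).factorial : ℝ))
      = (-1:ℝ)^(m+1) * ((1/(s:ℝ)^(m+3)) * ((s:ℝ) * wc s (m+1) (m+1) / ((m+1).factorial : ℝ)))
      from by ring]
  rw [← mul_assoc, ← pow_add, Even.neg_one_pow ⟨2*m+2, by ring⟩, one_mul]

lemma cpos (hs : 1 ≤ s) {e f : ℕ} {W : ℝ} (hW : 0 < W) :
    0 < (1/(s:ℝ)^e) * ((s:ℝ) * W / (f.factorial : ℝ)) := by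
  have hs' : (0:ℝ) < s := by exact_mod_cast Nat.pos_of_ne_zero (by omega)
  have hf : (0:ℝ) < (f.factorial : ℝ) := by exact_mod_cast f.factorial_pos
  positivity

lemma E'_sign (hs : 1 ≤ s) (k : ℕ) : 0 < (-1:ℝ)^k * E' s k := by
  rcases k with _ | j
  · norm_num [E']
  · show 0 < (-1:ℝ)^(j+1) * E s j
    obtain ⟨m, rfl | rfl | rfl⟩ : ∃ m, j = 3*m ∨ j = 3*m+1 ∨ j = 3*m+2 := ⟨j/3, by omega⟩
    · rw [show (3*m+1 : ℕ) = 3*m+1 from rfl, E_3n_abs]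
      exact cpos hs (w_pos s m (m+1))
    · rw [show (3*m+1+1 : ℕ) = 3*m+2 from rfl, E_3n1_abs]
      exact cpos hs (w_pos s (m+1) (m+1))
    · rw [show (3*m+2+1 : ℕ) = 3*m+3 from rfl, E_3n2_abs]
      exact cpos hs (wc_pos s (m+1) (m+1) hs)

lemma w01_lt (hs : 1 ≤ s) : w s 0 1 < 1 := by
  have h1 : (∫ x in (0:ℝ)..1, (1:ℝ)) = 1 := by simp
  rw [← h1]
  apply intlt (cont_w s 0 1) continuous_const
  intro x hx
  have hx0 : 0 < x := hx.1
  have hx1 : x < 1 := hx.2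
  have hs1 : (1:ℝ) ≤ s := by exact_mod_cast hs
  have hs0 : (0:ℝ) < s := by linarith
  have epos : 0 < Real.exp (x / s) := Real.exp_pos _
  have hne : x / (s:ℝ) ≠ 0 := by positivity
  have key : (1 - x/(s:ℝ)) * Real.exp (x/s) < 1 := by
    have := Real.add_one_lt_exp (x := -(x/(s:ℝ))) (by simpa using hne)
    rw [Real.exp_neg] at this
    have h2 : (1 - x/(s:ℝ)) < (Real.exp (x/s))⁻¹ := by linarith
    calc (1 - x/(s:ℝ)) * Real.exp (x/s) < (Real.exp (x/s))⁻¹ * Real.exp (x/s) :=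
          mul_lt_mul_of_pos_right h2 epos
      _ = 1 := inv_mul_cancel₀ (ne_of_gt epos)
  have hxs : x / (s:ℝ) ≤ x := div_le_self hx0.le hs1
  calc x^0 * (1-x)^1 * Real.exp (x / s) = (1-x) * Real.exp (x/s) := by ring
    _ ≤ (1 - x/(s:ℝ)) * Real.exp (x/s) := by
        apply mul_le_mul_of_nonneg_right (by linarith) epos.le
    _ < 1 := key

lemma E'_dec (hs : 1 ≤ s) (k : ℕ) :
    (-1:ℝ)^(k+1) * E' s (k+1) < (-1:ℝ)^k * E' s k := by
  have hs' : (0:ℝ) < s := by exact_mod_cast Nat.pos_of_ne_zero (by omega)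
  rcases k with _ | j
  · show (-1:ℝ)^(0+1) * E s 0 < (-1:ℝ)^0 * E' s 0
    rw [show (0+1 : ℕ) = 3*0+1 from rfl, show (0:ℕ) = 3*0 from rfl, E_3n_abs]
    show (1/(s:ℝ)^(0+2)) * ((s:ℝ) * w s 0 (0+1) / (Nat.factorial 0 : ℝ)) < (-1:ℝ)^0 * E' s 0
    have h01 := w01_lt (s := s) hs
    have hw := w_pos s 0 1
    have hs1 : (1:ℝ) ≤ s := by exact_mod_cast hs
    have hsq : (1:ℝ) ≤ (s:ℝ)^2 := one_le_pow₀ hs1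
    have hkey : (s:ℝ) * w s 0 1 < (s:ℝ)^2 := by nlinarith
    have : (1/(s:ℝ)^(0+2)) * ((s:ℝ) * w s 0 (0+1) / (Nat.factorial 0 : ℝ)) < 1 := by
      norm_num
      rw [inv_mul_lt_iff₀ (by positivity : (0:ℝ) < (s:ℝ)^2)]
      calc (s:ℝ) * w s 0 1 < (s:ℝ)^2 := hkey
        _ = (s:ℝ)^2 * 1 := by ring
    simpa [E'] using this
  · show (-1:ℝ)^(j+2) * E s (j+1) < (-1:ℝ)^(j+1) * E s j
    obtain ⟨m, rfl | rfl | rfl⟩ : ∃ m, j = 3*m ∨ j = 3*m+1 ∨ j = 3*m+2 := ⟨j/3, by omega⟩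
    · -- |E(3m+1)| < |E(3m)|
      rw [show (3*m+2 : ℕ) = 3*m+2 from rfl, E_3n1_abs, E_3n_abs]
      have h1 : w s (m+1) (m+1) / ((m+1).factorial : ℝ) < w s m (m+1) / (m.factorial : ℝ) := by
        have hlt := w_lt_left s m (m+1)
        have hff : (m.factorial : ℝ) ≤ ((m+1).factorial : ℝ) := by
          exact_mod_cast Nat.factorial_le (by omega)
        have hf0 : (0:ℝ) < (m.factorial : ℝ) := by exact_mod_cast m.factorial_pos
        have hf1 : (0:ℝ) < ((m+1).factorial : ℝ) := by exact_mod_cast (m+1).factorial_pos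
        calc w s (m+1) (m+1) / ((m+1).factorial : ℝ) ≤ w s (m+1) (m+1) / (m.factorial : ℝ) := by
              apply div_le_div_of_nonneg_left (w_pos s (m+1) (m+1)).le hf0 hff
          _ < w s m (m+1) / (m.factorial : ℝ) := by
              exact div_lt_div_of_pos_right hlt hf0
      rw [mul_div_assoc, mul_div_assoc]
      apply mul_lt_mul_of_pos_left _ (by positivity : (0:ℝ) < 1/(s:ℝ)^(m+2))
      exact mul_lt_mul_of_pos_left h1 hs'
    · -- |E(3m+2)| < |E(3m+1)|
      rw [show (3*m+1+2 : ℕ) = 3*m+3 from rfl, show (3*m+1+1 : ℕ) = 3*m+2 from rfl,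
        E_3n2_abs, E_3n1_abs]
      have key := wc_lt s (m+1) (m+1) hs
      have hrw : (1/(s:ℝ)^(m+2)) * ((s:ℝ) * w s (m+1) (m+1) / ((m+1).factorial : ℝ))
          = (1/(s:ℝ)^(m+3)) * ((s:ℝ) * ((s:ℝ) * w s (m+1) (m+1)) / ((m+1).factorial : ℝ)) := by
        have hf1 : ((m+1).factorial : ℝ) ≠ 0 := by
          exact_mod_cast (m+1).factorial_ne_zero
        field_simp
        ring
      rw [hrw, mul_div_assoc, mul_div_assoc]
      apply mul_lt_mul_of_pos_left _ (by positivity : (0:ℝ) < 1/(s:ℝ)^(m+3))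
      have hf1 : (0:ℝ) < ((m+1).factorial : ℝ) := by exact_mod_cast (m+1).factorial_pos
      apply mul_lt_mul_of_pos_left _ hs'
      exact div_lt_div_of_pos_right key hf1
    · -- |E(3(m+1))| < |E(3m+2)|
      show (-1:ℝ)^(3*(m+1)+1) * E s (3*(m+1)) < (-1:ℝ)^(3*m+3) * E s (3*m+2)
      rw [E_3n_abs, E_3n2_abs]
      have key := w_lt_wc s (m+1) hs
      rw [mul_div_assoc, mul_div_assoc]
      have h3 : (m+1)+2 = m+3 := by ring
      rw [h3]
      apply mul_lt_mul_of_pos_left _ (by positivity : (0:ℝ) < 1/(s:ℝ)^(m+3))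
      have hf1 : (0:ℝ) < ((m+1).factorial : ℝ) := by exact_mod_cast (m+1).factorial_pos
      apply mul_lt_mul_of_pos_left _ hs'
      exact div_lt_div_of_pos_right key hf1

end Kom

namespace Kom

open GenContFract

variable {s : ℕ}

lemma E'_ne (hs : 1 ≤ s) (k : ℕ) : E' s k ≠ 0 := by
  have := E'_sign hs k
  intro h
  rw [h, mul_zero] at this
  exact lt_irrefl _ this

/-- fractional part at step k -/
noncomputable def fr (s k : ℕ) : ℝ := -E' s (k+1) / E' s k

lemma fr_eq (s k : ℕ) :
    fr s k = ((-1:ℝ)^(k+1) * E' s (k+1)) / ((-1:ℝ)^k * E' s k) := by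
  unfold fr
  rw [pow_succ]
  rw [show (-1:ℝ)^k * -1 * E' s (k+1) = (-1:ℝ)^k * (-E' s (k+1)) from by ring]
  rw [mul_div_mul_left _ _ (pow_ne_zero k (by norm_num : (-1:ℝ) ≠ 0))]

lemma fr_pos (hs : 1 ≤ s) (k : ℕ) : 0 < fr s k := by
  rw [fr_eq]
  exact div_pos (E'_sign hs (k+1)) (E'_sign hs k)

lemma fr_lt_one (hs : 1 ≤ s) (k : ℕ) : fr s k < 1 := by
  rw [fr_eq, div_lt_one (E'_sign hs k)]
  exact E'_dec hs k

lemma fr_succ (hs : 1 ≤ s) (k : ℕ) :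
    (fr s k)⁻¹ = (a s (k+1) : ℝ) + fr s (k+1) := by
  have hrec := E'_rec hs k
  have hE0 := E'_ne hs k
  have hE1 := E'_ne hs (k+1)
  show (-E' s (k+1) / E' s k)⁻¹ = (a s (k+1) : ℝ) + -E' s (k+2) / E' s (k+1)
  rw [inv_div, hrec]
  field_simp
  ring

lemma ifp_of_add {n : ℕ} {f : ℝ} (h0 : 0 < f) (h1 : f < 1) :
    IntFractPair.of ((n:ℝ) + f) = ⟨(n:ℤ), f⟩ := by
  unfold IntFractPair.of
  have hfl : ⌊f⌋ = 0 := Int.floor_eq_zero_iff.mpr ⟨h0.le, h1⟩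
  have h2 : ((n:ℤ):ℝ) + f = (n:ℝ) + f := by push_cast; ring
  congr 1
  · rw [← h2, Int.floor_intCast_add, hfl, add_zero]
  · rw [← h2, Int.fract_intCast_add, Int.fract_eq_self.mpr ⟨h0.le, h1⟩]

lemma fr0 (hs : 1 ≤ s) : fr s 0 = (s:ℝ) * Real.exp (1/(s:ℝ)) - ((s:ℝ)+1) := by
  have hs0 : (s:ℝ) ≠ 0 := by positivity
  show -E' s 1 / E' s 0 = _
  show -E s 0 / 1 = _
  rw [show (0:ℕ) = 3*0 from rfl, E_3n, u01 s hs]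
  norm_num
  field_simp
  ring

lemma stream_eq (hs : 1 ≤ s) (k : ℕ) :
    IntFractPair.stream ((s:ℝ) * Real.exp (1/(s:ℝ))) k = some ⟨(a s k : ℤ), fr s k⟩ := by
  induction k with
  | zero =>
    rw [IntFractPair.stream_zero]
    congr 1
    have h0 := fr_pos hs 0
    have h1 := fr_lt_one hs 0
    have hfr := fr0 (s := s) hs
    have : (s:ℝ) * Real.exp (1/(s:ℝ)) = ((s+1 : ℕ) : ℝ) + fr s 0 := by
      rw [hfr]; push_cast; ring
    rw [this, ifp_of_add h0 h1]
    have ha : a s 0 = s + 1 := by simp [a]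
    rw [ha]
  | succ n ih =>
    rw [IntFractPair.stream_succ_of_some ih (by simpa using (fr_pos hs n).ne')]
    rw [show (⟨(a s n : ℤ), fr s n⟩ : IntFractPair ℝ).fr = fr s n from rfl]
    rw [fr_succ hs n]
    have : (a s (n+1) : ℝ) + fr s (n+1) = ((a s (n+1) : ℕ) : ℝ) + fr s (n+1) := by norm_num
    rw [this, ifp_of_add (fr_pos hs (n+1)) (fr_lt_one hs (n+1))]

lemma of_h (hs : 1 ≤ s) :
    (GenContFract.of ((s:ℝ) * Real.exp (1/(s:ℝ)))).h = ((s:ℝ)+1) := by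
  rw [GenContFract.of_h_eq_floor]
  have h0 := fr_pos hs 0
  have h1 := fr_lt_one hs 0
  have hfr := fr0 (s := s) hs
  have : ⌊(s:ℝ) * Real.exp (1/(s:ℝ))⌋ = ((s:ℤ)+1) := by
    rw [Int.floor_eq_iff]
    constructor
    · push_cast; linarith
    · push_cast; linarith
  rw [this]
  push_cast; ring

lemma of_s_get (hs : 1 ≤ s) (n : ℕ) :
    (GenContFract.of ((s:ℝ) * Real.exp (1/(s:ℝ)))).s.get? n
      = some ⟨1, ((a s (n+1) : ℤ) : ℝ)⟩ :=
  GenContFract.get?_of_eq_some_of_succ_get?_intFractPair_stream (stream_eq hs (n+1))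

end Kom

namespace Kom

open GenContFract

variable {s : ℕ}

lemma E0_eq (hs : 1 ≤ s) : E s 0 = ((s:ℝ)+1) - (s:ℝ) * Real.exp (1/(s:ℝ)) := by
  have hs0 : (s:ℝ) ≠ 0 := by positivity
  rw [show (0:ℕ) = 3*0 from rfl, E_3n, u01 s hs]
  norm_num
  field_simp
  ring

lemma D_eq (hs : 1 ≤ s) (k : ℕ) :
    (GenContFract.of ((s:ℝ) * Real.exp (1/(s:ℝ)))).nums k
      - ((s:ℝ) * Real.exp (1/(s:ℝ))) * (GenContFract.of ((s:ℝ) * Real.exp (1/(s:ℝ)))).dens k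
      = E s k := by
  set A : ℝ := (s:ℝ) * Real.exp (1/(s:ℝ)) with hA
  set g := GenContFract.of A with hg
  have base0 : g.nums 0 - A * g.dens 0 = E s 0 := by
    rw [GenContFract.zeroth_num_eq_h, GenContFract.zeroth_den_eq_one, of_h hs, E0_eq hs]
    ring
  have base1 : g.nums 1 - A * g.dens 1 = E s 1 := by
    rw [GenContFract.first_num_eq (of_s_get hs 0), GenContFract.first_den_eq (of_s_get hs 0)]
    have h1 : E s 1 = (a s 1 : ℝ) * E s 0 + 1 := E'_rec hs 0
    rw [h1, E0_eq hs, of_h hs]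
    show ((a s 1 : ℤ) : ℝ) * ((s:ℝ)+1) + 1 - A * ((a s 1 : ℤ) : ℝ) = _
    push_cast
    ring
  have step : ∀ n : ℕ, g.nums n - A * g.dens n = E s n →
      g.nums (n+1) - A * g.dens (n+1) = E s (n+1) →
      g.nums (n+2) - A * g.dens (n+2) = E s (n+2) := by
    intro n h1 h2
    have hn := GenContFract.nums_recurrence (of_s_get hs (n+1)) rfl rfl
    have hd := GenContFract.dens_recurrence (of_s_get hs (n+1)) rfl rfl
    rw [hn, hd]
    have h3 : E s (n+2) = (a s (n+2) : ℝ) * E s (n+1) + E s n := E'_rec hs (n+1)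
    rw [h3, ← h1, ← h2]
    show ((a s (n+2) : ℤ) : ℝ) * g.nums (n+1) + 1 * g.nums n
        - A * (((a s (n+2) : ℤ) : ℝ) * g.dens (n+1) + 1 * g.dens n) = _
    push_cast
    ring
  have H : ∀ k, (g.nums k - A * g.dens k = E s k)
      ∧ (g.nums (k+1) - A * g.dens (k+1) = E s (k+1)) := by
    intro k
    induction k with
    | zero => exact ⟨base0, base1⟩
    | succ n ih => exact ⟨ih.2, step n ih.1 ih.2⟩
  exact (H k).1

lemma int_i (s n : ℕ) :
    (∫ x in (0:ℝ)..1, (x^n * (x-1)^(n+1) / (n.factorial : ℝ)) * ((s:ℝ) * Real.exp (x/(s:ℝ))))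
      = (s:ℝ) * u s n (n+1) / (n.factorial : ℝ) := by
  have h : (s:ℝ) * u s n (n+1) / (n.factorial : ℝ)
      = ∫ x in (0:ℝ)..1, ((s:ℝ)/(n.factorial : ℝ)) * (x^n * (x-1)^(n+1) * Real.exp (x/(s:ℝ))) := by
    rw [intervalIntegral.integral_const_mul]
    unfold u
    ring
  rw [h]
  apply intervalIntegral.integral_congr
  intro x _
  show (x^n * (x-1)^(n+1) / (n.factorial : ℝ)) * ((s:ℝ) * Real.exp (x/(s:ℝ)))
    = ((s:ℝ)/(n.factorial : ℝ)) * (x^n * (x-1)^(n+1) * Real.exp (x/(s:ℝ)))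
  ring

lemma int_ii (s n : ℕ) :
    (∫ x in (0:ℝ)..1,
        (x^(n+1) * (x-1)^(n+1) / ((n+1).factorial : ℝ)) * ((s:ℝ) * Real.exp (x/(s:ℝ))))
      = (s:ℝ) * u s (n+1) (n+1) / ((n+1).factorial : ℝ) := by
  have h : (s:ℝ) * u s (n+1) (n+1) / ((n+1).factorial : ℝ)
      = ∫ x in (0:ℝ)..1,
          ((s:ℝ)/((n+1).factorial : ℝ)) * (x^(n+1) * (x-1)^(n+1) * Real.exp (x/(s:ℝ))) := by
    rw [intervalIntegral.integral_const_mul]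
    unfold u
    ring
  rw [h]
  apply intervalIntegral.integral_congr
  intro x _
  show (x^(n+1) * (x-1)^(n+1) / ((n+1).factorial : ℝ)) * ((s:ℝ) * Real.exp (x/(s:ℝ)))
    = ((s:ℝ)/((n+1).factorial : ℝ)) * (x^(n+1) * (x-1)^(n+1) * Real.exp (x/(s:ℝ)))
  ring

lemma int_iii (s n : ℕ) :
    (∫ x in (0:ℝ)..1,
        ((x + (s:ℝ) - 1) * x^(n+1) * (x-1)^(n+1) / ((n+1).factorial : ℝ))
          * ((s:ℝ) * Real.exp (x/(s:ℝ))))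
      = (s:ℝ) * uc s (n+1) (n+1) / ((n+1).factorial : ℝ) := by
  have h : (s:ℝ) * uc s (n+1) (n+1) / ((n+1).factorial : ℝ)
      = ∫ x in (0:ℝ)..1,
          ((s:ℝ)/((n+1).factorial : ℝ))
            * ((x + (s:ℝ) - 1) * x^(n+1) * (x-1)^(n+1) * Real.exp (x/(s:ℝ))) := by
    rw [intervalIntegral.integral_const_mul]
    unfold uc
    ring
  rw [h]
  apply intervalIntegral.integral_congr
  intro x _
  show ((x + (s:ℝ) - 1) * x^(n+1) * (x-1)^(n+1) / ((n+1).factorial : ℝ))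
        * ((s:ℝ) * Real.exp (x/(s:ℝ)))
    = ((s:ℝ)/((n+1).factorial : ℝ))
        * ((x + (s:ℝ) - 1) * x^(n+1) * (x-1)^(n+1) * Real.exp (x/(s:ℝ)))
  ring

end Kom


/-- The numerator `pₙ` of the `n`th convergent of the regular continued fraction of `α`. -/
noncomputable def cfNum (α : ℝ) (n : ℕ) : ℝ := (GenContFract.of α).nums n

/-- The denominator `qₙ` of the `n`th convergent of the regular continued fraction of `α`. -/
noncomputable def cfDen (α : ℝ) (n : ℕ) : ℝ := (GenContFract.of α).dens n

theorem komatsu_integral_formulas_star (s : ℕ) (hs : 1 ≤ s) :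
    let α : ℝ := (s : ℝ) * Real.exp (1 / (s : ℝ))
    ∀ n : ℕ,
      (cfNum α (3 * n) - α * cfDen α (3 * n) =
        (1 / (s : ℝ) ^ (n + 2)) *
          ∫ x in (0:ℝ)..1,
            (x ^ n * (x - 1) ^ (n + 1) / (n.factorial : ℝ)) *
              ((s : ℝ) * Real.exp (x / (s : ℝ))) ) ∧
      (cfNum α (3 * n + 1) - α * cfDen α (3 * n + 1) =
        -(1 / (s : ℝ) ^ (n + 2)) *
          ∫ x in (0:ℝ)..1,
            (x ^ (n + 1) * (x - 1) ^ (n + 1) / ((n + 1).factorial : ℝ)) *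
              ((s : ℝ) * Real.exp (x / (s : ℝ))) ) ∧
      (cfNum α (3 * n + 2) - α * cfDen α (3 * n + 2) =
        (1 / (s : ℝ) ^ (n + 3)) *
          ∫ x in (0:ℝ)..1,
            ((x + (s : ℝ) - 1) * x ^ (n + 1) * (x - 1) ^ (n + 1) / ((n + 1).factorial : ℝ)) *
              ((s : ℝ) * Real.exp (x / (s : ℝ))) ) := by
  intro α n
  have hα : α = (s:ℝ) * Real.exp (1/(s:ℝ)) := rfl
  refine ⟨?_, ?_, ?_⟩
  · unfold cfNum cfDen
    rw [hα, Kom.D_eq hs (3*n), Kom.E_3n, Kom.int_i]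
  · unfold cfNum cfDen
    rw [hα, Kom.D_eq hs (3*n+1), Kom.E_3n1, Kom.int_ii]
    ring
  · unfold cfNum cfDen
    rw [hα, Kom.D_eq hs (3*n+2), Kom.E_3n2, Kom.int_iii]
end

section
/- Let pₙ*/qₙ* denote the nth convergent of the regular continued fraction expansion of e. Then ∑_{n≥0} |pₙ* − e·qₙ*| = 2·e·∫₀¹ e^(−t²) dt − e. -/
open Real

/-- `JJ m l = ∫₀¹ xᵐ (1-x)ˡ eˣ dx`. -/
noncomputable def JJ (m l : ℕ) : ℝ := ∫ x in (0:ℝ)..1, x ^ m * (1 - x) ^ l * Real.exp x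

lemma JJ_cont (m l : ℕ) : Continuous fun x : ℝ => x ^ m * (1 - x) ^ l * Real.exp x := by
  fun_prop

lemma JJ_intble (m l : ℕ) :
    IntervalIntegrable (fun x : ℝ => x ^ m * (1 - x) ^ l * Real.exp x) MeasureTheory.volume 0 1 :=
  (JJ_cont m l).intervalIntegrable 0 1

lemma JJ_pos (m l : ℕ) : 0 < JJ m l := by
  apply intervalIntegral.intervalIntegral_pos_of_pos_on (JJ_intble m l)
  · intro x hx
    have h1 : (0:ℝ) < x := hx.1
    have h2 : (0:ℝ) < 1 - x := by linarith [hx.2]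
    positivity
  · norm_num

/-- Fundamental-theorem identity from `d/dx (x^(m+1)(1-x)^(l+1)eˣ)`. -/
lemma JJ_ftc (m l : ℕ) :
    ((m:ℝ)+1) * JJ m (l+1) - ((l:ℝ)+1) * JJ (m+1) l + JJ (m+1) (l+1) = 0 := by
  have key : ∫ x in (0:ℝ)..1,
      (((m:ℝ)+1) * (x ^ m * (1 - x) ^ (l+1) * Real.exp x)
        - ((l:ℝ)+1) * (x ^ (m+1) * (1 - x) ^ l * Real.exp x)
        + x ^ (m+1) * (1 - x) ^ (l+1) * Real.exp x) = 0 := by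
    have : ∀ x ∈ Set.uIcc (0:ℝ) 1, HasDerivAt
        (fun y : ℝ => y ^ (m+1) * (1 - y) ^ (l+1) * Real.exp y)
        (((m:ℝ)+1) * (x ^ m * (1 - x) ^ (l+1) * Real.exp x)
        - ((l:ℝ)+1) * (x ^ (m+1) * (1 - x) ^ l * Real.exp x)
        + x ^ (m+1) * (1 - x) ^ (l+1) * Real.exp x) x := by
      intro x _
      have h1 : HasDerivAt (fun y : ℝ => y ^ (m+1)) (((m:ℝ)+1) * x ^ m) x := by
        simpa using hasDerivAt_pow (m+1) x
      have h2 : HasDerivAt (fun y : ℝ => (1 - y) ^ (l+1)) (-(((l:ℝ)+1) * (1 - x) ^ l)) x := by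
        have hb : HasDerivAt (fun y : ℝ => 1 - y) (-1) x := by
          simpa using (hasDerivAt_id x).const_sub 1
        have := (hasDerivAt_pow (l+1) (1 - x)).comp x hb
        simpa [mul_comm, mul_assoc, Function.comp_def] using this
      have h3 := Real.hasDerivAt_exp x
      have := ((h1.mul h2).mul h3)
      exact this.congr_deriv (by simp only [Pi.mul_apply]; ring)
    rw [intervalIntegral.integral_eq_sub_of_hasDerivAt this (by
      apply Continuous.intervalIntegrable; fun_prop)]
    norm_num
  rw [intervalIntegral.integral_add (((JJ_intble m (l+1)).const_mul _).sub
      ((JJ_intble (m+1) l).const_mul _)) (JJ_intble (m+1) (l+1)),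
    intervalIntegral.integral_sub ((JJ_intble m (l+1)).const_mul _)
      ((JJ_intble (m+1) l).const_mul _),
    intervalIntegral.integral_const_mul, intervalIntegral.integral_const_mul] at key
  simpa [JJ] using key

/-- splitting `1 = (1-x) + x`. -/
lemma JJ_split (m l : ℕ) : JJ m l = JJ m (l+1) + JJ (m+1) l := by
  unfold JJ
  rw [← intervalIntegral.integral_add (JJ_intble m (l+1)) (JJ_intble (m+1) l)]
  apply intervalIntegral.integral_congr
  intro x _
  ring

lemma JJ_quarter (n : ℕ) : 4 * JJ (n+1) (n+1) ≤ JJ n n := by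
  have : JJ (n+1) (n+1) ≤ ∫ x in (0:ℝ)..1, (1/4) * (x ^ n * (1 - x) ^ n * Real.exp x) := by
    unfold JJ
    apply intervalIntegral.integral_mono_on (by norm_num) (JJ_intble (n+1) (n+1))
      ((JJ_intble n n).const_mul _)
    intro x hx
    have h1 : 0 ≤ x := hx.1
    have h2 : 0 ≤ 1 - x := by simp at hx; linarith [hx.2]
    have h3 : x * (1 - x) ≤ 1/4 := by nlinarith [sq_nonneg (2*x-1)]
    have h4 : (0:ℝ) ≤ x ^ n * (1 - x) ^ n := by positivity
    have : x ^ (n+1) * (1 - x) ^ (n+1) ≤ (1/4) * (x ^ n * (1 - x) ^ n) := by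
      calc x ^ (n+1) * (1 - x) ^ (n+1) = (x * (1-x)) * (x ^ n * (1 - x) ^ n) := by ring
        _ ≤ (1/4) * (x ^ n * (1 - x) ^ n) := by
            apply mul_le_mul_of_nonneg_right h3 h4
    have he : 0 < Real.exp x := Real.exp_pos x
    calc x ^ (n+1) * (1 - x) ^ (n+1) * Real.exp x
        ≤ (1/4) * (x ^ n * (1 - x) ^ n) * Real.exp x := by
          apply mul_le_mul_of_nonneg_right this he.le
      _ = 1/4 * (x ^ n * (1 - x) ^ n * Real.exp x) := by ring
  rw [intervalIntegral.integral_const_mul] at this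
  unfold JJ at this ⊢
  linarith [this]

lemma JJ00 : JJ 0 0 = Real.exp 1 - 1 := by
  have : ∀ x ∈ Set.uIcc (0:ℝ) 1, HasDerivAt Real.exp (x ^ 0 * (1-x)^0 * Real.exp x) x := by
    intro x _; simpa using Real.hasDerivAt_exp x
  unfold JJ
  rw [intervalIntegral.integral_eq_sub_of_hasDerivAt this (JJ_intble 0 0)]
  simp

lemma JJ10 : JJ 1 0 = 1 := by
  have : ∀ x ∈ Set.uIcc (0:ℝ) 1, HasDerivAt (fun y : ℝ => (y - 1) * Real.exp y)
      (x ^ 1 * (1-x)^0 * Real.exp x) x := by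
    intro x _
    have h1 : HasDerivAt (fun y : ℝ => y - 1) 1 x := by simpa using (hasDerivAt_id x).sub_const 1
    have := h1.mul (Real.hasDerivAt_exp x)
    exact this.congr_deriv (by ring)
  unfold JJ
  rw [intervalIntegral.integral_eq_sub_of_hasDerivAt this (JJ_intble 1 0)]
  simp

open scoped Nat
noncomputable def IA (n : ℕ) : ℝ := JJ n n / n !
noncomputable def IB (n : ℕ) : ℝ := JJ (n+1) n / n !
noncomputable def IC (n : ℕ) : ℝ := JJ n (n+1) / n !

lemma fact_pos' (n : ℕ) : (0:ℝ) < (n ! : ℝ) := by positivity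

lemma IA_pos (n : ℕ) : 0 < IA n := div_pos (JJ_pos n n) (fact_pos' n)
lemma IB_pos (n : ℕ) : 0 < IB n := div_pos (JJ_pos (n+1) n) (fact_pos' n)
lemma IC_pos (n : ℕ) : 0 < IC n := div_pos (JJ_pos n (n+1)) (fact_pos' n)

lemma L4 (n : ℕ) : IA n = IB n + IC n := by
  unfold IA IB IC
  rw [JJ_split n n]
  ring

lemma L2 (n : ℕ) : IA (n+1) = IB n - IC n := by
  have h := JJ_ftc n n
  unfold IA IB IC
  have hf : ((n+1)! : ℝ) = ((n:ℝ)+1) * (n ! : ℝ) := by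
    rw [Nat.factorial_succ]; push_cast; ring
  rw [hf]
  have h1 : (n ! : ℝ) ≠ 0 := (fact_pos' n).ne'
  have h2 : ((n:ℝ)+1) ≠ 0 := by positivity
  push_cast at h ⊢
  field_simp
  linear_combination h

lemma L3 (n : ℕ) : IC n = (2*(n:ℝ)+2) * IA (n+1) + IB (n+1) := by
  have h := JJ_ftc (n+1) n
  have hs := JJ_split (n+1) n
  unfold IA IB IC
  have hf : ((n+1)! : ℝ) = ((n:ℝ)+1) * (n ! : ℝ) := by
    rw [Nat.factorial_succ]; push_cast; ring
  rw [hf]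
  have h1 : (n ! : ℝ) ≠ 0 := (fact_pos' n).ne'
  have h2 : ((n:ℝ)+1) ≠ 0 := by positivity
  have h0 := JJ_ftc n n
  push_cast at h h0 hs ⊢
  field_simp
  linear_combination h0 - h + ((n:ℝ)+1) * hs

lemma L7 (n : ℕ) : 4 * IA (n+1) ≤ IA n := by
  have h := JJ_quarter n
  have hJ : 0 < JJ (n+1) (n+1) := JJ_pos (n+1) (n+1)
  unfold IA
  have hf : ((n+1)! : ℝ) = ((n:ℝ)+1) * (n ! : ℝ) := by
    rw [Nat.factorial_succ]; push_cast; ring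
  rw [hf]
  have h1 : (0:ℝ) < (n ! : ℝ) := fact_pos' n
  have h2 : (1:ℝ) ≤ ((n:ℝ)+1) := by
    have : (0:ℝ) ≤ (n:ℝ) := Nat.cast_nonneg n
    linarith
  have step1 : 4 * (JJ (n+1) (n+1) / (((n:ℝ)+1) * (n ! : ℝ))) ≤
      4 * (JJ (n+1) (n+1) / (n ! : ℝ)) := by
    have : JJ (n+1) (n+1) / (((n:ℝ)+1) * (n ! : ℝ)) ≤ JJ (n+1) (n+1) / (n ! : ℝ) := by
      apply div_le_div_of_nonneg_left hJ.le h1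
      nlinarith
    linarith
  have step2 : (4 * JJ (n+1) (n+1)) / (n ! : ℝ) ≤ JJ n n / (n ! : ℝ) := by gcongr
  have e1 : 4 * (JJ (n+1) (n+1) / (n ! : ℝ)) = (4 * JJ (n+1) (n+1)) / (n ! : ℝ) := by ring
  linarith

lemma IA0 : IA 0 = Real.exp 1 - 1 := by unfold IA; rw [JJ00]; simp
lemma IB0 : IB 0 = 1 := by unfold IB; rw [JJ10]; simp
lemma IC0 : IC 0 = Real.exp 1 - 2 := by
  have := L4 0
  rw [IA0, IB0] at this
  linarith
/-- `EE n` is `|q_{n-1} e - p_{n-1}|` for the convergents of `e`; `EE 0 = 1`. -/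
noncomputable def EE (n : ℕ) : ℝ :=
  if n % 3 = 0 then IB (n/3) else if n % 3 = 1 then IC (n/3) else IA (n/3+1)

/-- `bq n` is the `(n+1)`st partial quotient of the continued fraction of `e`. -/
def bq (n : ℕ) : ℤ := if n % 3 = 1 then 2*(n/3 : ℕ)+2 else 1

lemma EE_3k (k : ℕ) : EE (3*k) = IB k := by
  unfold EE
  have h1 : (3*k) % 3 = 0 := by omega
  have h2 : (3*k) / 3 = k := by omega
  rw [h1, h2]; simp

lemma EE_3k1 (k : ℕ) : EE (3*k+1) = IC k := by
  unfold EE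
  have h1 : (3*k+1) % 3 = 1 := by omega
  have h2 : (3*k+1) / 3 = k := by omega
  rw [h1, h2]; simp

lemma EE_3k2 (k : ℕ) : EE (3*k+2) = IA (k+1) := by
  unfold EE
  have h1 : (3*k+2) % 3 = 2 := by omega
  have h2 : (3*k+2) / 3 = k := by omega
  rw [h1, h2]; simp

lemma bq_3k (k : ℕ) : bq (3*k) = 1 := by
  unfold bq
  have h1 : (3*k) % 3 = 0 := by omega
  rw [h1]; simp

lemma bq_3k1 (k : ℕ) : bq (3*k+1) = 2*k+2 := by
  unfold bq
  have h1 : (3*k+1) % 3 = 1 := by omega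
  have h2 : (3*k+1) / 3 = k := by omega
  rw [h1, h2]; simp

lemma bq_3k2 (k : ℕ) : bq (3*k+2) = 1 := by
  unfold bq
  have h1 : (3*k+2) % 3 = 2 := by omega
  rw [h1]; simp

lemma EE_pos (n : ℕ) : 0 < EE n := by
  unfold EE
  split_ifs <;> [exact IB_pos _; exact IC_pos _; exact IA_pos _]

/-- the key recurrence `EE n = bq n * EE (n+1) + EE (n+2)`. -/
lemma KI (n : ℕ) : EE n = (bq n : ℝ) * EE (n+1) + EE (n+2) := by
  obtain ⟨k, hk | hk | hk⟩ : ∃ k, n = 3*k ∨ n = 3*k+1 ∨ n = 3*k+2 := ⟨n/3, by omega⟩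
  · subst hk
    rw [EE_3k, bq_3k, show 3*k+1+1 = 3*k+2 by ring, EE_3k1, EE_3k2]
    push_cast
    have := L2 k
    linarith
  · subst hk
    rw [show 3*k+1+1 = 3*k+2 by ring, show 3*k+2+1 = 3*(k+1) by ring,
      EE_3k1, bq_3k1, EE_3k2, EE_3k]
    push_cast
    have := L3 k
    linarith
  · subst hk
    rw [show 3*k+2+1 = 3*(k+1) by ring, show 3*k+2+2 = 3*(k+1)+1 by ring,
      EE_3k2, bq_3k2, EE_3k, EE_3k1]
    push_cast
    have := L4 (k+1)
    linarith

lemma EE_dec (n : ℕ) : EE (n+1) < EE n := by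
  obtain ⟨k, hk | hk | hk⟩ : ∃ k, n = 3*k ∨ n = 3*k+1 ∨ n = 3*k+2 := ⟨n/3, by omega⟩
  · subst hk
    rw [EE_3k, EE_3k1]
    have := L2 k
    have := IA_pos (k+1)
    linarith
  · subst hk
    rw [show 3*k+1+1 = 3*k+2 by ring, EE_3k1, EE_3k2]
    have h2 := L2 k
    have h4 := L4 k
    have h7 := L7 k
    have := IA_pos k
    have := IA_pos (k+1)
    linarith
  · subst hk
    rw [show 3*k+2+1 = 3*(k+1) by ring, EE_3k2, EE_3k]
    have := L4 (k+1)
    have := IC_pos (k+1)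
    linarith
lemma EE0 : EE 0 = 1 := by
  have h := EE_3k 0
  norm_num at h
  rw [h, IB0]

lemma EE1 : EE 1 = Real.exp 1 - 2 := by
  have h := EE_3k1 0
  norm_num at h
  rw [h, IC0]

lemma floor_e : ⌊Real.exp 1⌋ = 2 := by
  have h1 := Real.exp_one_gt_d9
  have h2 := Real.exp_one_lt_d9
  rw [Int.floor_eq_iff]
  norm_num
  constructor <;> nlinarith

lemma fract_e : Int.fract (Real.exp 1) = Real.exp 1 - 2 := by
  rw [Int.fract, floor_e]; norm_num

/-- the complete quotients of `e`. -/
noncomputable def xq : ℕ → ℝ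
  | 0 => Real.exp 1
  | n+1 => (Int.fract (xq n))⁻¹

lemma floor_aux (n : ℕ) (h : xq (n+1) = EE n / EE (n+1)) :
    ⌊xq (n+1)⌋ = bq n ∧ Int.fract (xq (n+1)) = EE (n+2) / EE (n+1) := by
  have hp1 := EE_pos (n+1)
  have hp2 := EE_pos (n+2)
  have hd := EE_dec (n+1)
  have hk := KI n
  have hval : xq (n+1) = (bq n : ℝ) + EE (n+2) / EE (n+1) := by
    rw [h, hk]; field_simp
  have hfl : ⌊xq (n+1)⌋ = bq n := by
    rw [hval, Int.floor_eq_iff]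
    constructor
    · have : 0 < EE (n+2) / EE (n+1) := div_pos hp2 hp1
      linarith
    · have : EE (n+2) / EE (n+1) < 1 := (div_lt_one hp1).mpr hd
      linarith
  refine ⟨hfl, ?_⟩
  rw [Int.fract, hfl, hval]
  ring

lemma xval : ∀ n, xq (n+1) = EE n / EE (n+1) := by
  intro n
  induction n with
  | zero =>
      show (Int.fract (xq 0))⁻¹ = _
      rw [show xq 0 = Real.exp 1 from rfl, fract_e, EE0, EE1, inv_eq_one_div]
  | succ n ih =>
      show (Int.fract (xq (n+1)))⁻¹ = _
      rw [(floor_aux n ih).2, inv_div]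

lemma fract_xq_ne (n : ℕ) : Int.fract (xq n) ≠ 0 := by
  cases n with
  | zero =>
      rw [show xq 0 = Real.exp 1 from rfl, fract_e]
      have := Real.exp_one_gt_d9
      norm_num
      nlinarith
  | succ n =>
      rw [(floor_aux n (xval n)).2]
      exact (div_pos (EE_pos (n+2)) (EE_pos (n+1))).ne'

lemma s_of_e (n : ℕ) : (GenContFract.of (Real.exp 1)).s.get? n = some ⟨1, (bq n : ℝ)⟩ := by
  have key : ∀ n k, (GenContFract.of (xq k)).s.get? n = (GenContFract.of (xq (k+n))).s.get? 0 := by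
    intro n
    induction n with
    | zero => intro k; rfl
    | succ n ih =>
        intro k
        rw [GenContFract.of_s_succ, show (Int.fract (xq k))⁻¹ = xq (k+1) from rfl, ih (k+1),
          show k+1+n = k+(n+1) by ring]
  rw [show Real.exp 1 = xq 0 from rfl, key n 0, show 0+n = n by ring]
  have hfr : Int.fract (xq n) ≠ 0 := fract_xq_ne n
  have hhead := GenContFract.of_s_head hfr
  rw [show (GenContFract.of (xq n)).s.get? 0 = (GenContFract.of (xq n)).s.head from rfl, hhead]
  have : (Int.fract (xq n))⁻¹ = xq (n+1) := rfl
  rw [this, (floor_aux n (xval n)).1]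

lemma h_of_e : (GenContFract.of (Real.exp 1)).h = 2 := by
  rw [GenContFract.of_h_eq_floor, floor_e]; norm_num

lemma numden (n : ℕ) :
    (GenContFract.of (Real.exp 1)).nums n
      - Real.exp 1 * (GenContFract.of (Real.exp 1)).dens n = (-1)^(n+1) * EE (n+1) := by
  induction n using Nat.twoStepInduction with
  | zero =>
      rw [GenContFract.zeroth_num_eq_h, GenContFract.zeroth_den_eq_one, h_of_e, EE1]
      ring
  | one =>
      have hn := GenContFract.first_num_eq (s_of_e 0)
      have hd := GenContFract.first_den_eq (s_of_e 0)
      have hb : (bq 0 : ℝ) = 1 := by have := bq_3k 0; norm_num at this; rw [this]; norm_num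
      have hk := KI 0
      rw [hn, hd, h_of_e, hb, EE0, EE1] at *
      have : EE (0+2) = 1 - (Real.exp 1 - 2) := by rw [hb] at hk; linarith
      rw [show (0:ℕ)+1+1 = 0+2 by ring, this]
      ring
  | more n ih1 ih2 =>
      have hn := GenContFract.nums_recurrence (g := GenContFract.of (Real.exp 1))
        (gp := ⟨1, (bq (n+1) : ℝ)⟩) (s_of_e (n+1)) rfl rfl
      have hd := GenContFract.dens_recurrence (g := GenContFract.of (Real.exp 1))
        (gp := ⟨1, (bq (n+1) : ℝ)⟩) (s_of_e (n+1)) rfl rfl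
      have hk := KI (n+1)
      rw [hn, hd]
      simp only []
      linear_combination ((bq (n+1) : ℝ)) * ih2 + ih1 + (-1:ℝ)^(n+1) * hk
lemma IA_le_geom (n : ℕ) : IA n ≤ IA 0 * (1/4)^n := by
  induction n with
  | zero => simp
  | succ n ih =>
      have h7 := L7 n
      have : IA (n+1) ≤ IA n / 4 := by linarith
      calc IA (n+1) ≤ IA n / 4 := this
        _ ≤ (IA 0 * (1/4)^n) / 4 := by linarith
        _ = IA 0 * (1/4)^(n+1) := by ring

lemma summ_IA : Summable IA := by
  apply Summable.of_nonneg_of_le (fun n => (IA_pos n).le) IA_le_geom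
  exact (summable_geometric_of_lt_one (by norm_num) (by norm_num)).mul_left _

lemma summ_IA' : Summable fun k => IA (k+1) := (summable_nat_add_iff 1).mpr summ_IA

lemma summ_IB : Summable IB := by
  apply Summable.of_nonneg_of_le (fun n => (IB_pos n).le) _ summ_IA
  intro n
  have := L4 n; have := IC_pos n; linarith

lemma summ_IC : Summable IC := by
  apply Summable.of_nonneg_of_le (fun n => (IC_pos n).le) _ summ_IA
  intro n
  have := L4 n; have := IB_pos n; linarith

lemma IA_as_integral (k : ℕ) :
    IA k = ∫ x in Set.Ioc (0:ℝ) 1, (x^k * (1-x)^k / k ! * Real.exp x) := by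
  unfold IA JJ
  rw [intervalIntegral.integral_of_le zero_le_one, ← MeasureTheory.integral_div]
  apply MeasureTheory.setIntegral_congr_fun measurableSet_Ioc
  intro x _
  dsimp only
  ring

lemma tsum_IA : ∑' k, IA k = ∫ x in (0:ℝ)..1, Real.exp (x*(1-x)) * Real.exp x := by
  have hcont : ∀ k : ℕ, Continuous fun x : ℝ => x^k * (1-x)^k / k ! * Real.exp x := by
    intro k; fun_prop
  have hF_int : ∀ k : ℕ, MeasureTheory.Integrable
      (fun x : ℝ => x^k * (1-x)^k / k ! * Real.exp x)
      (MeasureTheory.volume.restrict (Set.Ioc (0:ℝ) 1)) := by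
    intro k
    exact (hcont k).integrableOn_Ioc
  have hnorm : ∀ k : ℕ, (∫ x in Set.Ioc (0:ℝ) 1, ‖x^k * (1-x)^k / k ! * Real.exp x‖) = IA k := by
    intro k
    rw [IA_as_integral k]
    apply MeasureTheory.setIntegral_congr_fun measurableSet_Ioc
    intro x hx
    apply Real.norm_of_nonneg
    have h1 : (0:ℝ) ≤ x := hx.1.le
    have h2 : (0:ℝ) ≤ 1 - x := by linarith [hx.2]
    positivity
  have hF_sum : Summable fun k : ℕ =>
      ∫ x in Set.Ioc (0:ℝ) 1, ‖x^k * (1-x)^k / k ! * Real.exp x‖ := by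
    apply Summable.congr summ_IA
    intro k; rw [hnorm k]
  have key := MeasureTheory.integral_tsum_of_summable_integral_norm hF_int hF_sum
  have hpt : ∀ x : ℝ, (∑' k : ℕ, x^k * (1-x)^k / k ! * Real.exp x)
      = Real.exp (x*(1-x)) * Real.exp x := by
    intro x
    have h1 : Real.exp (x*(1-x)) = ∑' k : ℕ, (x*(1-x))^k / k ! := by
      rw [Real.exp_eq_exp_ℝ, NormedSpace.exp_eq_tsum_div]
    rw [h1, ← tsum_mul_right]
    apply tsum_congr
    intro k
    rw [mul_pow]
  calc ∑' k, IA k = ∑' k, ∫ x in Set.Ioc (0:ℝ) 1, (x^k * (1-x)^k / k ! * Real.exp x) := by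
        apply tsum_congr; intro k; exact IA_as_integral k
    _ = ∫ x in Set.Ioc (0:ℝ) 1, ∑' k : ℕ, x^k * (1-x)^k / k ! * Real.exp x := key
    _ = ∫ x in Set.Ioc (0:ℝ) 1, Real.exp (x*(1-x)) * Real.exp x := by
        apply MeasureTheory.setIntegral_congr_fun measurableSet_Ioc
        intro x _; exact hpt x
    _ = ∫ x in (0:ℝ)..1, Real.exp (x*(1-x)) * Real.exp x := by
        rw [intervalIntegral.integral_of_le zero_le_one]

lemma SA_val : ∑' k, IA k = Real.exp 1 * ∫ t in (0:ℝ)..1, Real.exp (-t^2) := by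
  rw [tsum_IA]
  have : (∫ x in (0:ℝ)..1, Real.exp (x*(1-x)) * Real.exp x)
      = ∫ x in (0:ℝ)..1, Real.exp 1 * Real.exp (-(1-x)^2) := by
    apply intervalIntegral.integral_congr
    intro x _
    dsimp only
    rw [← Real.exp_add, ← Real.exp_add]
    congr 1
    ring
  rw [this, intervalIntegral.integral_const_mul]
  congr 1
  have := intervalIntegral.integral_comp_sub_left (a := (0:ℝ)) (b := 1)
    (fun t : ℝ => Real.exp (-t^2)) 1
  norm_num at this
  rw [← this]
lemma fiber_sum (k : ℕ) : (∑' j : Fin 3, EE (k*3 + (j:ℕ))) = IB k + IC k + IA (k+1) := by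
  rw [tsum_fintype, Fin.sum_univ_three]
  have e0 : k*3 + ((0 : Fin 3):ℕ) = 3*k := by norm_num; ring
  have e1 : k*3 + ((1 : Fin 3):ℕ) = 3*k+1 := by norm_num; ring
  have e2 : k*3 + ((2 : Fin 3):ℕ) = 3*k+2 := by
    have : ((2 : Fin 3):ℕ) = 2 := rfl
    rw [this]; ring
  rw [e0, e1, e2, EE_3k, EE_3k1, EE_3k2]

lemma summ_g : Summable (fun p : ℕ × Fin 3 => EE (p.1 * 3 + (p.2:ℕ))) := by
  rw [summable_prod_of_nonneg (fun p => (EE_pos _).le)]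
  refine ⟨fun k => Summable.of_finite, ?_⟩
  apply Summable.congr ((summ_IB.add summ_IC).add summ_IA')
  intro k
  rw [fiber_sum k]

lemma summ_EE : Summable EE := by
  have := (Equiv.summable_iff (Nat.divModEquiv 3).symm (f := EE)).mp
  apply this
  exact summ_g

lemma tsum_EE : ∑' n, EE n = 2 * (∑' k, IA k) - IA 0 := by
  have h1 : ∑' n, EE n = ∑' p : ℕ × Fin 3, EE ((Nat.divModEquiv 3).symm p) :=
    (Equiv.tsum_eq (Nat.divModEquiv 3).symm EE).symm
  have h2 : ∑' p : ℕ × Fin 3, EE ((Nat.divModEquiv 3).symm p)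
      = ∑' k, ∑' j : Fin 3, EE (k*3 + (j:ℕ)) := Summable.tsum_prod' summ_g (fun b => Summable.of_finite)
  have h3 : (∑' k, ∑' j : Fin 3, EE (k*3 + (j:ℕ))) = ∑' k, (IB k + IC k + IA (k+1)) :=
    tsum_congr fiber_sum
  have h4 : (∑' k, (IB k + IC k + IA (k+1)))
      = ((∑' k, IB k) + ∑' k, IC k) + ∑' k, IA (k+1) := by
    rw [Summable.tsum_add (summ_IB.add summ_IC) summ_IA', Summable.tsum_add summ_IB summ_IC]
  have h5 : (∑' k, IB k) + ∑' k, IC k = ∑' k, IA k := by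
    rw [← Summable.tsum_add summ_IB summ_IC]
    exact tsum_congr fun k => (L4 k).symm
  have h6 : ∑' k, IA k = IA 0 + ∑' k, IA (k+1) := Summable.tsum_eq_zero_add summ_IA
  rw [h1, h2, h3, h4, h5]
  linarith

theorem errorSum_e :
    (∑' n : ℕ, |cfNum (Real.exp 1) n - Real.exp 1 * cfDen (Real.exp 1) n|) =
      2 * Real.exp 1 * (∫ t in (0:ℝ)..1, Real.exp (-t ^ 2)) - Real.exp 1 := by
  have habs : ∀ n, |cfNum (Real.exp 1) n - Real.exp 1 * cfDen (Real.exp 1) n| = EE (n+1) := by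
    intro n
    unfold cfNum cfDen
    rw [numden n, abs_mul, abs_pow, abs_neg, abs_one, one_pow, one_mul,
      abs_of_pos (EE_pos (n+1))]
  have h := Summable.tsum_eq_zero_add summ_EE
  calc (∑' n : ℕ, |cfNum (Real.exp 1) n - Real.exp 1 * cfDen (Real.exp 1) n|)
      = ∑' n, EE (n+1) := tsum_congr habs
    _ = (∑' n, EE n) - EE 0 := by linarith
    _ = 2 * (Real.exp 1 * ∫ t in (0:ℝ)..1, Real.exp (-t^2)) - (Real.exp 1 - 1) - 1 := by
        rw [tsum_EE, SA_val, IA0, EE0]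
    _ = 2 * Real.exp 1 * (∫ t in (0:ℝ)..1, Real.exp (-t ^ 2)) - Real.exp 1 := by ring
end

section
/- The series identity ∑_{n≥0} (−1)^(n+1) / ((n+1)! · (2n+1)) = 1 − e^(−1) − 2·∫₀¹ e^(−t²) dt holds. -/
open Real MeasureTheory

lemma fact_summable : Summable fun n : ℕ => ((n.factorial : ℝ))⁻¹ := by
  have := NormedSpace.norm_expSeries_div_summable (1 : ℝ)
  simpa [Real.norm_eq_abs, abs_of_nonneg] using this

lemma exp_tsum (x : ℝ) : Real.exp x = ∑' n : ℕ, x ^ n / n.factorial := by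
  rw [Real.exp_eq_exp_ℝ, NormedSpace.exp_eq_tsum_div]

lemma exp_neg_sq (t : ℝ) :
    Real.exp (-t ^ 2) = ∑' n : ℕ, ((-1 : ℝ) ^ n * t ^ (2 * n) / n.factorial) := by
  rw [exp_tsum]
  congr 1
  funext n
  rw [pow_mul, ← neg_pow]

lemma term_integral (n : ℕ) :
    ∫ t in (0:ℝ)..1, ((-1 : ℝ) ^ n * t ^ (2 * n) / n.factorial)
      = (-1 : ℝ) ^ n / (n.factorial * (2 * n + 1)) := by
  rw [intervalIntegral.integral_div, intervalIntegral.integral_const_mul, integral_pow]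
  have : ((0:ℝ)) ^ (2 * n + 1) = 0 := zero_pow (by omega)
  rw [this]
  push_cast
  field_simp
  ring

lemma integral_exp_neg_sq :
    (∫ t in (0:ℝ)..1, Real.exp (-t ^ 2))
      = ∑' n : ℕ, (-1 : ℝ) ^ n / (n.factorial * (2 * n + 1)) := by
  set F : ℕ → ℝ → ℝ := fun n t => (-1 : ℝ) ^ n * t ^ (2 * n) / n.factorial with hF
  have hFc : ∀ n, Continuous (F n) := fun n => by continuity
  have hint : ∀ n, IntegrableOn (F n) (Set.Ioc (0:ℝ) 1) volume := fun n =>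
    (hFc n).integrableOn_Ioc
  have hsum : Summable fun n => ∫ t in Set.Ioc (0:ℝ) 1, ‖F n t‖ := by
    apply Summable.of_nonneg_of_le (fun n => integral_nonneg fun t => norm_nonneg _)
      (fun n => ?_) fact_summable
    have hb : ∀ t ∈ Set.Ioc (0:ℝ) 1, ‖F n t‖ ≤ ((n.factorial : ℝ))⁻¹ := by
      intro t ht
      have h1 : |t| ≤ 1 := abs_le.2 ⟨by linarith [ht.1], ht.2⟩
      have : ‖F n t‖ = |t| ^ (2 * n) / n.factorial := by
        simp [hF, abs_div, abs_mul, abs_pow, abs_neg]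
      rw [this]
      have : |t| ^ (2 * n) ≤ 1 := pow_le_one₀ (abs_nonneg t) h1
      rw [div_le_iff₀ (by positivity)]
      calc |t| ^ (2 * n) ≤ 1 := this
        _ = ((n.factorial : ℝ))⁻¹ * n.factorial := by
            field_simp
    calc ∫ t in Set.Ioc (0:ℝ) 1, ‖F n t‖
        ≤ ∫ _t in Set.Ioc (0:ℝ) 1, ((n.factorial : ℝ))⁻¹ :=
          setIntegral_mono_on (hint n).norm (integrableOn_const (by simp) (by simp))
            measurableSet_Ioc hb
      _ = ((n.factorial : ℝ))⁻¹ := by simp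
  have key : ∑' n, (∫ t in Set.Ioc (0:ℝ) 1, F n t)
      = ∫ t in Set.Ioc (0:ℝ) 1, (∑' n, F n t) :=
    integral_tsum_of_summable_integral_norm hint hsum
  rw [intervalIntegral.integral_of_le (by norm_num : (0:ℝ) ≤ 1)]
  have : ∀ t : ℝ, Real.exp (-t ^ 2) = ∑' n, F n t := fun t => exp_neg_sq t
  rw [setIntegral_congr_fun measurableSet_Ioc (fun t _ => this t), ← key]
  congr 1
  funext n
  rw [← intervalIntegral.integral_of_le (by norm_num : (0:ℝ) ≤ 1), term_integral]

theorem series_identity :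
    (∑' n : ℕ, (-1 : ℝ) ^ (n + 1) / (((n + 1).factorial : ℝ) * (2 * (n : ℝ) + 1))) =
      1 - Real.exp (-1) - 2 * ∫ t in (0:ℝ)..1, Real.exp (-t ^ 2) := by
  have hg : Summable fun n : ℕ => ((-1:ℝ)) ^ n / n.factorial :=
    NormedSpace.expSeries_div_summable (-1 : ℝ)
  -- c n = (-1)^n / (n+1)!
  have hc : Summable fun n : ℕ => ((-1:ℝ)) ^ n / (n + 1).factorial := by
    apply Summable.of_norm
    apply Summable.of_nonneg_of_le (fun n => norm_nonneg _) (fun n => ?_)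
      (fact_summable.comp_injective (add_left_injective 1))
    simp [norm_div, abs_of_nonneg, div_le_div_of_nonneg_left, abs_pow]
  have ha : Summable fun n : ℕ => ((-1:ℝ)) ^ n / (n.factorial * (2 * n + 1)) := by
    apply Summable.of_norm
    apply Summable.of_nonneg_of_le (fun n => norm_nonneg _) (fun n => ?_) fact_summable
    have h1 : (1:ℝ) ≤ n.factorial * (2 * n + 1) := by
      have := Nat.one_le_iff_ne_zero.2 (Nat.factorial_ne_zero n)
      have h2 : (1:ℝ) ≤ n.factorial := by exact_mod_cast this
      nlinarith [Nat.cast_nonneg (α := ℝ) n]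
    rw [norm_div, norm_pow]
    simp only [norm_neg, norm_one, one_pow, one_div]
    rw [Real.norm_of_nonneg (by positivity)]
    apply inv_anti₀ (by positivity)
    nlinarith [Nat.one_le_iff_ne_zero.2 (Nat.factorial_ne_zero n),
      (by exact_mod_cast Nat.one_le_iff_ne_zero.2 (Nat.factorial_ne_zero n) : (1:ℝ) ≤ n.factorial)]
  have hsum_c : (∑' n : ℕ, ((-1:ℝ)) ^ n / (n + 1).factorial) = 1 - Real.exp (-1) := by
    have h0 : Real.exp (-1) = ∑' n : ℕ, ((-1:ℝ)) ^ n / n.factorial := by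
      rw [exp_tsum]
    have h1 := Summable.tsum_eq_zero_add hg
    have h2 : (∑' n : ℕ, ((-1:ℝ)) ^ (n + 1) / (n + 1).factorial)
        = Real.exp (-1) - 1 := by
      rw [h0, h1]; simp
    have h3 : ∀ n : ℕ, ((-1:ℝ)) ^ n / (n + 1).factorial
        = -(((-1:ℝ)) ^ (n + 1) / (n + 1).factorial) := by
      intro n; rw [pow_succ]; ring
    rw [tsum_congr h3, tsum_neg, h2]; ring
  have hterm : ∀ n : ℕ,
      (-1 : ℝ) ^ (n + 1) / (((n + 1).factorial : ℝ) * (2 * (n : ℝ) + 1))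
        = ((-1:ℝ)) ^ n / (n + 1).factorial
          - 2 * (((-1:ℝ)) ^ n / (n.factorial * (2 * n + 1))) := by
    intro n
    have hf : ((n + 1).factorial : ℝ) = (n + 1) * n.factorial := by
      rw [Nat.factorial_succ]; push_cast; ring
    have h1 : ((n.factorial : ℝ)) ≠ 0 := Nat.cast_ne_zero.2 (Nat.factorial_ne_zero n)
    have h2 : (2 * (n:ℝ) + 1) ≠ 0 := by positivity
    have h3 : ((n:ℝ) + 1) ≠ 0 := by positivity
    rw [hf, pow_succ]
    field_simp
    ring
  rw [tsum_congr hterm, Summable.tsum_sub hc (ha.mul_left 2), tsum_mul_left, hsum_c, integral_exp_neg_sq]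
end

section
/- The regular continued fraction expansion of the real number 4·(11·sin(1/2) − 6·cos(1/2)) / (53·cos(1/2) − 97·sin(1/2)) is [a₀; a₁, a₂, ...] where a₀ = 4, a₁ = 3, and for every integer k ≥ 1, a_{2k} = 4 and a_{2k+1} = k + 3 (i.e., the expansion is [4; 3, 4, 4, 4, 5, 4, 6, 4, 7, 4, ...]). -/
open Real

namespace HetyeiAux

open Nat GenContFract

/-- Series terms: `dd n m` is the `m`-th term (in absolute value) of the alternating series
for the Bessel-type sequence `cc n`. -/
noncomputable def dd (n m : ℕ) : ℝ :=
  (2*m+2*n+1 : ℝ) / (((2*m)‼ : ℕ) * ((2*m+2*n+1)‼ : ℕ)) * (1/2 : ℝ)^(2*m+n)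

lemma df_cast_pos (k : ℕ) : (0:ℝ) < ((k‼ : ℕ) : ℝ) := by
  exact_mod_cast Nat.doubleFactorial_pos k

lemma dd_pos (n m : ℕ) : 0 < dd n m := by
  unfold dd
  have h1 := df_cast_pos (2*m)
  have h2 := df_cast_pos (2*m+2*n+1)
  positivity

lemma df_cast_add_two (k : ℕ) : (((k+2)‼ : ℕ) : ℝ) = (k+2 : ℝ) * ((k‼ : ℕ) : ℝ) := by
  rw [Nat.doubleFactorial_add_two]; push_cast; ring

lemma dd_succ (n m : ℕ) : dd n (m+1) = dd n m / (4*(2*m+2)*(2*m+2*n+1)) := by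
  have e1 : 2*(m+1) = 2*m+2 := by ring
  have e2 : 2*m+2+2*n+1 = (2*m+2*n+1)+2 := by ring
  have e3 : 2*m+2+n = (2*m+n)+2 := by ring
  have h1 := df_cast_pos (2*m)
  have h2 := df_cast_pos (2*m+2*n+1)
  unfold dd
  rw [e1, e2, e3, df_cast_add_two, df_cast_add_two, pow_add]
  have hx : ((2*m+2*n+1 : ℕ) : ℝ) = 2*(m:ℝ)+2*n+1 := by push_cast; ring
  have hy : ((2*m : ℕ) : ℝ) + 2 = 2*(m:ℝ)+2 := by push_cast; ring
  rw [hx]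
  push_cast
  have hn1 : (2*(m:ℝ)+2*n+1) > 0 := by positivity
  field_simp
  ring

lemma dd_succ_le (n m : ℕ) : dd n (m+1) ≤ dd n m / 8 := by
  rw [dd_succ]
  have h := (dd_pos n m).le
  apply div_le_div_of_nonneg_left h (by norm_num)
  have : (8:ℝ) ≤ 4*(2*(m:ℝ)+2)*(2*m+2*n+1) := by nlinarith [Nat.cast_nonneg (α := ℝ) m, Nat.cast_nonneg (α := ℝ) n]
  push_cast
  linarith

lemma dd_le (n m : ℕ) : dd n m ≤ dd n 0 * (1/8)^m := by
  induction m with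
  | zero => simp
  | succ m ih =>
      calc dd n (m+1) ≤ dd n m / 8 := dd_succ_le n m
      _ ≤ (dd n 0 * (1/8)^m) / 8 := by linarith
      _ = dd n 0 * (1/8)^(m+1) := by ring

lemma dd_tail_le (n m : ℕ) : dd n (m+1) ≤ dd n 1 * (1/8)^m := by
  induction m with
  | zero => simp
  | succ m ih =>
      calc dd n (m+2) ≤ dd n (m+1) / 8 := dd_succ_le n (m+1)
      _ ≤ (dd n 1 * (1/8)^m) / 8 := by linarith
      _ = dd n 1 * (1/8)^(m+1) := by ring

lemma summable_geom8 (a : ℝ) : Summable (fun m : ℕ => a * (1/8)^m) :=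
  (summable_geometric_of_lt_one (by norm_num) (by norm_num)).mul_left a

lemma summable_dd (n : ℕ) : Summable (dd n) :=
  Summable.of_nonneg_of_le (fun m => (dd_pos n m).le) (dd_le n) (summable_geom8 (dd n 0))

lemma summable_dd_tail (n : ℕ) : Summable (fun m => dd n (m+1)) :=
  Summable.of_nonneg_of_le (fun m => (dd_pos n _).le) (dd_tail_le n) (summable_geom8 (dd n 1))

lemma summable_alt (n : ℕ) : Summable (fun m : ℕ => (-1:ℝ)^m * dd n m) := by
  apply Summable.of_abs
  have : (fun m : ℕ => |(-1:ℝ)^m * dd n m|) = dd n := by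
    funext m
    rw [abs_mul, abs_pow, abs_neg, abs_one, one_pow, one_mul, abs_of_pos (dd_pos n m)]
  rw [this]; exact summable_dd n

lemma summable_alt_tail (n : ℕ) : Summable (fun m : ℕ => (-1:ℝ)^m * dd n (m+1)) := by
  apply Summable.of_abs
  have : (fun m : ℕ => |(-1:ℝ)^m * dd n (m+1)|) = fun m => dd n (m+1) := by
    funext m
    rw [abs_mul, abs_pow, abs_neg, abs_one, one_pow, one_mul, abs_of_pos (dd_pos n _)]
  rw [this]; exact summable_dd_tail n

/-- The Bessel-type sequence. -/
noncomputable def cc (n : ℕ) : ℝ := ∑' m : ℕ, (-1:ℝ)^m * dd n m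

lemma cc_eq_head_sub (n : ℕ) :
    cc n = dd n 0 - ∑' m : ℕ, (-1:ℝ)^m * dd n (m+1) := by
  unfold cc
  rw [Summable.tsum_eq_zero_add (summable_alt n)]
  have h1 : (fun m : ℕ => (-1:ℝ)^(m+1) * dd n (m+1))
      = fun m : ℕ => -((-1:ℝ)^m * dd n (m+1)) := by
    funext m; ring
  simp only [pow_zero, one_mul]
  rw [h1, tsum_neg]
  ring

lemma tail_abs (n : ℕ) : |∑' m : ℕ, (-1:ℝ)^m * dd n (m+1)| ≤ dd n 1 * (8/7) := by
  have h1 : ‖∑' m : ℕ, (-1:ℝ)^m * dd n (m+1)‖ ≤ ∑' m : ℕ, ‖(-1:ℝ)^m * dd n (m+1)‖ := by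
    apply norm_tsum_le_tsum_norm
    have : (fun m : ℕ => ‖(-1:ℝ)^m * dd n (m+1)‖) = fun m => dd n (m+1) := by
      funext m
      rw [Real.norm_eq_abs, abs_mul, abs_pow, abs_neg, abs_one, one_pow, one_mul,
        abs_of_pos (dd_pos n _)]
    rw [this]; exact summable_dd_tail n
  have h2 : (fun m : ℕ => ‖(-1:ℝ)^m * dd n (m+1)‖) = fun m => dd n (m+1) := by
    funext m
    rw [Real.norm_eq_abs, abs_mul, abs_pow, abs_neg, abs_one, one_pow, one_mul,
      abs_of_pos (dd_pos n _)]
  rw [Real.norm_eq_abs, h2] at h1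
  refine h1.trans ?_
  have h3 : ∑' m : ℕ, dd n (m+1) ≤ ∑' m : ℕ, dd n 1 * (1/8)^m :=
    Summable.tsum_le_tsum (dd_tail_le n) (summable_dd_tail n) (summable_geom8 (dd n 1))
  refine h3.trans_eq ?_
  rw [tsum_mul_left, tsum_geometric_of_lt_one (by norm_num) (by norm_num)]
  norm_num

lemma dd1_le (n : ℕ) : dd n 1 ≤ dd n 0 / 8 := dd_succ_le n 0

lemma cc_ge (n : ℕ) : 6/7 * dd n 0 ≤ cc n := by
  have h1 := cc_eq_head_sub n
  have h2 := tail_abs n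
  have h3 := dd1_le n
  have h4 := abs_le.mp h2
  linarith [h4.2]

lemma cc_le (n : ℕ) : cc n ≤ 8/7 * dd n 0 := by
  have h1 := cc_eq_head_sub n
  have h2 := tail_abs n
  have h3 := dd1_le n
  have h4 := abs_le.mp h2
  linarith [h4.1]

lemma cc_pos (n : ℕ) : 0 < cc n :=
  lt_of_lt_of_le (by have := dd_pos n 0; linarith) (cc_ge n)

lemma dd0_rel (n : ℕ) : dd n 0 = (4*(n:ℝ)+2) * dd (n+1) 0 := by
  have e2 : 2*0+2*(n+1)+1 = (2*0+2*n+1)+2 := by ring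
  have e3 : 2*0+(n+1) = (2*0+n)+1 := by ring
  have h2 := df_cast_pos (2*0+2*n+1)
  unfold dd
  rw [e2, e3, df_cast_add_two, pow_succ]
  push_cast
  have hn1 : (2*(0:ℝ)+2*n+1) > 0 := by positivity
  field_simp
  ring

lemma cc_lt (n : ℕ) : cc (n+1) < cc n := by
  have h1 := cc_le (n+1)
  have h2 := cc_ge n
  have h3 := dd0_rel n
  have h4 := dd_pos (n+1) 0
  have hn : (0:ℝ) ≤ (n:ℝ) := Nat.cast_nonneg n
  nlinarith

lemma dd_rec (n m : ℕ) :
    dd n (m+1) = (4*(n:ℝ)+2) * dd (n+1) (m+1) + dd (n+2) m := by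
  have e1 : 2*(m+1) = 2*m+2 := by ring
  have e2 : 2*m+2+2*n+1 = (2*m+2*n+1)+2 := by ring
  have e3 : 2*m+2+2*(n+1)+1 = ((2*m+2*n+1)+2)+2 := by ring
  have e4 : 2*m+2*(n+2)+1 = ((2*m+2*n+1)+2)+2 := by ring
  have e5 : 2*m+2+n = (2*m+n)+2 := by ring
  have e6 : 2*m+2+(n+1) = (2*m+n)+3 := by ring
  have e7 : 2*m+(n+2) = (2*m+n)+2 := by ring
  have h1 := df_cast_pos (2*m)
  have h2 := df_cast_pos (2*m+2*n+1)
  unfold dd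
  rw [e1, e2, e3, e4, e5, e6, e7, df_cast_add_two, df_cast_add_two, df_cast_add_two,
    pow_add, pow_add]
  push_cast
  rw [show 2*m+2*n+3 = (2*m+2*n+1)+2 by ring, df_cast_add_two]
  push_cast
  have hn1 : (2*(m:ℝ)+2*n+1) > 0 := by positivity
  have hn2 : (2*(m:ℝ)+2*n+1+2) > 0 := by positivity
  have hn3 : (2*(m:ℝ)+2) > 0 := by positivity
  field_simp
  ring

lemma cc_rec (n : ℕ) : cc (n+2) = (4*(n:ℝ)+2) * cc (n+1) - cc n := by
  have e1 := cc_eq_head_sub n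
  have e2 := cc_eq_head_sub (n+1)
  have h0 := dd0_rel n
  have hsplit : ∑' m : ℕ, (-1:ℝ)^m * dd n (m+1)
      = (4*(n:ℝ)+2) * (∑' m : ℕ, (-1:ℝ)^m * dd (n+1) (m+1)) + cc (n+2) := by
    have hc : (fun m : ℕ => (-1:ℝ)^m * dd n (m+1))
        = fun m : ℕ => (4*(n:ℝ)+2) * ((-1:ℝ)^m * dd (n+1) (m+1)) + (-1:ℝ)^m * dd (n+2) m := by
      funext m
      rw [dd_rec n m]; ring
    rw [hc, Summable.tsum_add ((summable_alt_tail (n+1)).mul_left _) (summable_alt (n+2)),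
      tsum_mul_left]
    rfl
  rw [hsplit] at e1
  linear_combination e1 - (4*(n:ℝ)+2) * e2 + h0

lemma cc_zero : cc 0 = Real.cos (1/2) := by
  rw [Real.cos_eq_tsum (1/2 : ℝ)]
  unfold cc
  apply tsum_congr
  intro m
  have key : dd 0 m = (1/2 : ℝ)^(2*m) / ((2*m)! : ℕ) := by
    unfold dd
    have hfac : ((2*m+1)! : ℕ) = ((2*m+1)‼) * ((2*m)‼) := Nat.factorial_eq_mul_doubleFactorial (2*m)
    have hfac2 : ((2*m+1)! : ℕ) = (2*m+1) * (2*m)! := Nat.factorial_succ (2*m)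
    have h1 := df_cast_pos (2*m)
    have h3 : (0:ℝ) < (((2*m)! : ℕ) : ℝ) := by exact_mod_cast Nat.factorial_pos (2*m)
    have e2 : 2*m+2*0+1 = 2*m+1 := by ring
    have e3 : 2*m+0 = 2*m := by ring
    rw [e2, e3]
    have hd : (((2*m)‼ : ℕ) : ℝ) * (((2*m+1)‼ : ℕ) : ℝ) = (2*(m:ℝ)+1) * (((2*m)! : ℕ) : ℝ) := by
      rw [← Nat.cast_mul, mul_comm ((2*m)‼) _, ← hfac, hfac2]
      push_cast; ring
    rw [hd]
    have hm : (0:ℝ) < 2*(m:ℝ)+1 := by positivity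
    push_cast
    field_simp
    ring
  rw [key]
  push_cast
  ring

lemma cc_one : cc 1 = Real.sin (1/2) := by
  rw [Real.sin_eq_tsum (1/2 : ℝ)]
  unfold cc
  apply tsum_congr
  intro m
  have key : dd 1 m = (1/2 : ℝ)^(2*m+1) / ((2*m+1)! : ℕ) := by
    unfold dd
    have hfac : ((2*m+1)! : ℕ) = ((2*m+1)‼) * ((2*m)‼) := Nat.factorial_eq_mul_doubleFactorial (2*m)
    have h1 := df_cast_pos (2*m)
    have e2 : 2*m+2*1+1 = (2*m+1)+2 := by ring
    have e4 : 2*m+1 = 2*m+1 := rfl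
    rw [e2, df_cast_add_two]
    have h2 := df_cast_pos (2*m+1)
    have hd : (((2*m+1)! : ℕ) : ℝ) = (((2*m+1)‼ : ℕ) : ℝ) * (((2*m)‼ : ℕ) : ℝ) := by
      rw [← Nat.cast_mul, ← hfac]
    rw [hd]
    push_cast
    field_simp
    ring
  rw [key]
  push_cast
  ring

lemma key_ineq (n : ℕ) : (4*(n:ℝ)+1) * cc (n+1) < cc n := by
  have h1 := cc_rec n
  have h2 := cc_lt (n+1)
  linarith


noncomputable def alp : ℝ := 4 * (11 * Real.sin (1 / 2) - 6 * Real.cos (1 / 2)) /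
      (53 * Real.cos (1 / 2) - 97 * Real.sin (1 / 2))

lemma cc2 : cc 2 = 2 * Real.sin (1/2) - Real.cos (1/2) := by
  have h := cc_rec 0
  norm_num at h
  rw [h, cc_zero, cc_one]

lemma cc3 : cc 3 = 11 * Real.sin (1/2) - 6 * Real.cos (1/2) := by
  have h := cc_rec 1
  norm_num at h
  rw [h, cc2, cc_one]
  ring_nf

lemma cc4 : cc 4 = 108 * Real.sin (1/2) - 59 * Real.cos (1/2) := by
  have h := cc_rec 2
  norm_num at h
  rw [h, cc3, cc2]
  ring_nf

lemma alp_eq : alp = 4 * cc 3 / (cc 3 - cc 4) := by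
  unfold alp
  rw [show cc 3 - cc 4 = 53 * Real.cos (1/2) - 97 * Real.sin (1/2) by rw [cc3, cc4]; ring, cc3]

lemma cc_gt13 (k : ℕ) : (4*(k:ℝ)+13) * cc (k+4) < cc (k+3) := by
  have h := key_ineq (k+3)
  push_cast at h
  have e : k+3+1 = k+4 := by omega
  rw [e] at h
  linarith

lemma cc_lt14 (k : ℕ) : cc (k+3) < (4*(k:ℝ)+14) * cc (k+4) := by
  have h := cc_rec (k+3)
  have e1 : k+3+2 = k+5 := by omega
  have e2 : k+3+1 = k+4 := by omega
  rw [e1, e2] at h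
  push_cast at h
  have h5 := cc_pos (k+5)
  linarith

lemma even_of (k : ℕ) :
    GenContFract.IntFractPair.of (4*cc (k+3)/(cc (k+3) - cc (k+4))) =
      ⟨4, 4*cc (k+4)/(cc (k+3) - cc (k+4))⟩ := by
  have hc4 := cc_pos (k+4)
  have h13 := cc_gt13 k
  have hk : (0:ℝ) ≤ (k:ℝ) := Nat.cast_nonneg k
  have hd : 0 < cc (k+3) - cc (k+4) := by nlinarith
  have hfl : ⌊4*cc (k+3)/(cc (k+3) - cc (k+4))⌋ = 4 := by
    rw [Int.floor_eq_iff]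
    constructor
    · rw [le_div_iff₀ hd]; push_cast; nlinarith
    · rw [div_lt_iff₀ hd]; push_cast; nlinarith
  have hfr : Int.fract (4*cc (k+3)/(cc (k+3) - cc (k+4))) =
      4*cc (k+4)/(cc (k+3) - cc (k+4)) := by
    rw [← Int.self_sub_floor, hfl]
    push_cast
    field_simp
    ring
  unfold GenContFract.IntFractPair.of
  rw [hfl, hfr]

lemma odd_of (k : ℕ) :
    GenContFract.IntFractPair.of ((cc (k+3) - cc (k+4))/(4*cc (k+4))) =
      ⟨(k:ℤ)+3, (cc (k+4) - cc (k+5))/(4*cc (k+4))⟩ := by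
  have hc4 := cc_pos (k+4)
  have h13 := cc_gt13 k
  have h14 := cc_lt14 k
  have hk : (0:ℝ) ≤ (k:ℝ) := Nat.cast_nonneg k
  have hrec : cc (k+5) = (4*(k:ℝ)+14) * cc (k+4) - cc (k+3) := by
    have h := cc_rec (k+3)
    have e1 : k+3+2 = k+5 := by omega
    have e2 : k+3+1 = k+4 := by omega
    rw [e1, e2] at h
    push_cast at h
    linarith
  have h4 : (0:ℝ) < 4 * cc (k+4) := by linarith
  have hfl : ⌊(cc (k+3) - cc (k+4))/(4*cc (k+4))⌋ = (k:ℤ)+3 := by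
    rw [Int.floor_eq_iff]
    constructor
    · rw [le_div_iff₀ h4]; push_cast; nlinarith
    · rw [div_lt_iff₀ h4]; push_cast; nlinarith
  have hfr : Int.fract ((cc (k+3) - cc (k+4))/(4*cc (k+4))) =
      (cc (k+4) - cc (k+5))/(4*cc (k+4)) := by
    rw [← Int.self_sub_floor, hfl, hrec]
    push_cast
    field_simp
    ring
  unfold GenContFract.IntFractPair.of
  rw [hfl, hfr]

lemma fe_pos (k : ℕ) : 0 < 4*cc (k+4)/(cc (k+3) - cc (k+4)) := by
  have hc4 := cc_pos (k+4)
  have h13 := cc_gt13 k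
  have hk : (0:ℝ) ≤ (k:ℝ) := Nat.cast_nonneg k
  have hd : 0 < cc (k+3) - cc (k+4) := by nlinarith
  positivity

lemma fo_pos (k : ℕ) : 0 < (cc (k+4) - cc (k+5))/(4*cc (k+4)) := by
  have hc4 := cc_pos (k+4)
  have hlt := cc_lt (k+4)
  have e : k+4+1 = k+5 := by omega
  rw [e] at hlt
  have hd : 0 < cc (k+4) - cc (k+5) := by linarith
  positivity

lemma stream_pair (k : ℕ) :
    GenContFract.IntFractPair.stream alp (2*k) =
      some ⟨4, 4*cc (k+4)/(cc (k+3) - cc (k+4))⟩ ∧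
    GenContFract.IntFractPair.stream alp (2*k+1) =
      some ⟨(k:ℤ)+3, (cc (k+4) - cc (k+5))/(4*cc (k+4))⟩ := by
  induction k with
  | zero =>
    have heven : GenContFract.IntFractPair.stream alp 0 =
        some ⟨4, 4*cc (0+4)/(cc (0+3) - cc (0+4))⟩ := by
      rw [GenContFract.IntFractPair.stream_zero]
      have h := even_of 0
      rw [show alp = 4*cc (0+3)/(cc (0+3) - cc (0+4)) by rw [alp_eq]]
      rw [h]
    constructor
    · simpa using heven
    · have hne : 4*cc (0+4)/(cc (0+3) - cc (0+4)) ≠ 0 := (fe_pos 0).ne'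
      have hs := GenContFract.IntFractPair.stream_succ_of_some heven hne
      have hinv : (4*cc (0+4)/(cc (0+3) - cc (0+4)))⁻¹ =
          (cc (0+3) - cc (0+4))/(4*cc (0+4)) := by
        rw [inv_div]
      rw [hinv, odd_of 0] at hs
      simpa using hs
  | succ k ih =>
    have heven : GenContFract.IntFractPair.stream alp (2*(k+1)) =
        some ⟨4, 4*cc (k+1+4)/(cc (k+1+3) - cc (k+1+4))⟩ := by
      have hne : (cc (k+4) - cc (k+5))/(4*cc (k+4)) ≠ 0 := (fo_pos k).ne'
      have hs := GenContFract.IntFractPair.stream_succ_of_some ih.2 hne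
      have hinv : ((cc (k+4) - cc (k+5))/(4*cc (k+4)))⁻¹ =
          4*cc (k+4)/(cc (k+4) - cc (k+5)) := by
        rw [inv_div]
      rw [hinv] at hs
      have h := even_of (k+1)
      rw [show k+1+3 = k+4 from by omega, show k+1+4 = k+5 from by omega] at h
      rw [h] at hs
      rw [show 2*(k+1) = 2*k+1+1 from by omega]
      rw [show k+1+3 = k+4 from by omega, show k+1+4 = k+5 from by omega]
      exact hs
    refine ⟨heven, ?_⟩
    have hne : 4*cc (k+1+4)/(cc (k+1+3) - cc (k+1+4)) ≠ 0 := (fe_pos (k+1)).ne'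
    have hs := GenContFract.IntFractPair.stream_succ_of_some heven hne
    have hinv : (4*cc (k+1+4)/(cc (k+1+3) - cc (k+1+4)))⁻¹ =
        (cc (k+1+3) - cc (k+1+4))/(4*cc (k+1+4)) := by
      rw [inv_div]
    rw [hinv, odd_of (k+1)] at hs
    exact hs

lemma partDen_of_stream {v : ℝ} {n : ℕ} {b : ℤ} {fr : ℝ}
    (h : GenContFract.IntFractPair.stream v (n+1) = some ⟨b, fr⟩) :
    (GenContFract.of v).partDens.get? n = some (b:ℝ) :=
  GenContFract.partDen_eq_s_b
    (GenContFract.get?_of_eq_some_of_succ_get?_intFractPair_stream h)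

lemma floor_alp : ⌊alp⌋ = 4 := by
  have h := even_of 0
  rw [show 4*cc (0+3)/(cc (0+3) - cc (0+4)) = alp from by rw [alp_eq]] at h
  unfold GenContFract.IntFractPair.of at h
  have := congrArg GenContFract.IntFractPair.b h
  simpa using this

end HetyeiAux


theorem hetyei_contFract :
    let α : ℝ := 4 * (11 * Real.sin (1 / 2) - 6 * Real.cos (1 / 2)) /
      (53 * Real.cos (1 / 2) - 97 * Real.sin (1 / 2))
    (GenContFract.of α).h = 4 ∧
      (GenContFract.of α).partDens.get? 0 = some 3 ∧
      ∀ k : ℕ, 1 ≤ k →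
        (GenContFract.of α).partDens.get? (2 * k - 1) = some 4 ∧
        (GenContFract.of α).partDens.get? (2 * k) = some ((k : ℝ) + 3) := by
  intro α
  have hα : α = HetyeiAux.alp := rfl
  rw [hα]
  refine ⟨?_, ?_, ?_⟩
  · rw [GenContFract.of_h_eq_floor, HetyeiAux.floor_alp]
    norm_num
  · have h := (HetyeiAux.stream_pair 0).2
    rw [show 2*0+1 = 0+1 from rfl] at h
    have := HetyeiAux.partDen_of_stream h
    simpa using this
  · intro k hk
    obtain ⟨j, rfl⟩ : ∃ j, k = j+1 := ⟨k-1, by omega⟩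
    constructor
    · have h := (HetyeiAux.stream_pair (j+1)).1
      rw [show 2*(j+1) = (2*j+1)+1 from by omega] at h
      have := HetyeiAux.partDen_of_stream h
      rw [show 2*(j+1)-1 = 2*j+1 from by omega]
      simpa using this
    · have h := (HetyeiAux.stream_pair (j+1)).2
      rw [show 2*(j+1)+1 = (2*(j+1))+1 from rfl] at h
      have := HetyeiAux.partDen_of_stream h
      rw [show (2*(j+1)) = 2*(j+1) from rfl]
      convert this using 2
      push_cast
      ring
end
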